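/- arXiv:2011.01886 — 11 statements merged into one kernel-verified Lean document; each statement's English description precedes it below -/
import Mathlib

section
/- Let D be a generalized sum of two vertex-disjoint digraphs D₁, D₂ with Hamiltonian cycles C₁ = (x₀,…,x_{n−1},x₀) and C₂ = (y₀,…,y_{m−1},y₀). If D contains no good pair of arcs between C₁ and C₂, then for every exterior arc x_s → y_t of D, every arc of the form x_{s+i} → y_{t−i} for 0 ≤ i ≤ lcm(n,m)−1 (subscripts mod n and mod m) is also an arc of D. -/
/-- In a generalized sum of two Hamiltonian digraphs with no good pair,
every exterior arc x_s → y_t generates its whole parallel class. -/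
theorem stmt1 {V : Type*} (A : V → V → Prop) {n m : ℕ}
    (hn : 2 ≤ n) (hm : 2 ≤ m)
    (x : ZMod n → V) (y : ZMod m → V)
    (hxinj : Function.Injective x) (hyinj : Function.Injective y)
    (hxcyc : ∀ i, A (x i) (x (i + 1))) (hycyc : ∀ i, A (y i) (y (i + 1)))
    (hdisj : ∀ s t, x s ≠ y t)
    (hcov : ∀ v : V, (∃ s, x s = v) ∨ (∃ t, y t = v))
    (hone : ∀ s t, Xor' (A (x s) (y t)) (A (y t) (x s)))
    (hngp : ¬ ∃ (s : ZMod n) (r : ZMod m), A (x s) (y r) ∧ A (y (r - 1)) (x (s + 1))) :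
    ∀ (s : ZMod n) (t : ZMod m), A (x s) (y t) →
      ∀ i : ℕ, i ≤ Nat.lcm n m - 1 → A (x (s + (i : ZMod n))) (y (t - (i : ZMod m))) := by
  intro s t hst i _
  push_neg at hngp
  induction i with
  | zero => simpa using hst
  | succ k ih =>
    have hk := ih (by omega) -- bound unused anyway? need arg
    have hno := hngp (s + (k : ZMod n)) (t - (k : ZMod m)) hk
    have hx := hone (s + (k : ZMod n) + 1) (t - (k : ZMod m) - 1)
    rcases hx with ⟨h1, _⟩ | ⟨h2, _⟩
    · have : ((k + 1 : ℕ) : ZMod n) = (k : ZMod n) + 1 := by push_cast; ring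
      rw [this]
      have h2 : ((k + 1 : ℕ) : ZMod m) = (k : ZMod m) + 1 := by push_cast; ring
      rw [h2]
      have e1 : s + ((k : ZMod n) + 1) = s + (k : ZMod n) + 1 := by ring
      have e2 : t - ((k : ZMod m) + 1) = t - (k : ZMod m) - 1 := by ring
      rw [e1, e2]; exact h1
    · exact absurd h2 hno
end

section
/- Let D be a generalized sum of two vertex-disjoint digraphs D₁, D₂ with Hamiltonian cycles C₁ = (x₀,…,x_{n−1},x₀) and C₂ = (y₀,…,y_{m−1},y₀). If D contains no good pair of arcs between C₁ and C₂, then for every exterior arc y_t → x_s of D, every arc of the form y_{t+i} → x_{s−i} for 0 ≤ i ≤ lcm(n,m)−1 (subscripts mod m and mod n) is also an arc of D. -/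
/-- In a generalized sum of two Hamiltonian digraphs with no good pair,
every exterior arc y_t → x_s generates its whole parallel class. -/
theorem stmt2 {V : Type*} (A : V → V → Prop) {n m : ℕ}
    (hn : 2 ≤ n) (hm : 2 ≤ m)
    (x : ZMod n → V) (y : ZMod m → V)
    (hxinj : Function.Injective x) (hyinj : Function.Injective y)
    (hxcyc : ∀ i, A (x i) (x (i + 1))) (hycyc : ∀ i, A (y i) (y (i + 1)))
    (hdisj : ∀ s t, x s ≠ y t)
    (hcov : ∀ v : V, (∃ s, x s = v) ∨ (∃ t, y t = v))
    (hone : ∀ s t, Xor' (A (x s) (y t)) (A (y t) (x s)))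
    (hngp : ¬ ∃ (s : ZMod n) (r : ZMod m), A (x s) (y r) ∧ A (y (r - 1)) (x (s + 1))) :
    ∀ (t : ZMod m) (s : ZMod n), A (y t) (x s) →
      ∀ i : ℕ, i ≤ Nat.lcm n m - 1 → A (y (t + (i : ZMod m))) (x (s - (i : ZMod n))) := by
  intro t s h i _
  induction i with
  | zero => simpa using h
  | succ k ih =>
    have hk : A (y (t + (k : ZMod m))) (x (s - (k : ZMod n))) := by
      apply ih
      omega
    by_contra hc
    have hx : A (x (s - ((k : ℕ) + 1 : ℕ))) (y (t + ((k : ℕ) + 1 : ℕ))) := by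
      rcases hone (s - ((k : ℕ) + 1 : ℕ)) (t + ((k : ℕ) + 1 : ℕ)) with ⟨ha, _⟩ | ⟨ha, _⟩
      · exact ha
      · exact absurd ha hc
    apply hngp
    refine ⟨s - ((k : ℕ) + 1 : ℕ), t + ((k : ℕ) + 1 : ℕ), hx, ?_⟩
    have e1 : t + ((k : ℕ) + 1 : ℕ) - 1 = t + (k : ZMod m) := by push_cast; ring
    have e2 : s - ((k : ℕ) + 1 : ℕ) + 1 = s - (k : ZMod n) := by push_cast; ring
    rw [e1, e2]
    exact hk
end

section
/- Let D be a strong generalized sum of two vertex-disjoint digraphs D₁, D₂ with Hamiltonian cycles C₁ = (x₀,…,x_{n−1},x₀) and C₂ = (y₀,…,y_{m−1},y₀). If D contains no good pair of arcs between C₁ and C₂, then there exists r ∈ [0, m−1] such that (x₀, y_r, y_{r+1}, x₀) is a directed 3-cycle in D (subscripts mod m). -/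
/-- In a strong generalized sum of two Hamiltonian digraphs with no good pair,
there is a 3-cycle (x₀, y_r, y_{r+1}, x₀). -/
theorem stmt3 {V : Type*} (A : V → V → Prop) {n m : ℕ}
    (hn : 2 ≤ n) (hm : 2 ≤ m)
    (x : ZMod n → V) (y : ZMod m → V)
    (hxinj : Function.Injective x) (hyinj : Function.Injective y)
    (hxcyc : ∀ i, A (x i) (x (i + 1))) (hycyc : ∀ i, A (y i) (y (i + 1)))
    (hdisj : ∀ s t, x s ≠ y t)
    (hcov : ∀ v : V, (∃ s, x s = v) ∨ (∃ t, y t = v))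
    (hone : ∀ s t, Xor' (A (x s) (y t)) (A (y t) (x s)))
    (hstrong : ∀ u v : V, u ≠ v → Relation.ReflTransGen A u v)
    (hngp : ¬ ∃ (s : ZMod n) (r : ZMod m), A (x s) (y r) ∧ A (y (r - 1)) (x (s + 1))) :
    ∃ r : ZMod m, A (x 0) (y r) ∧ A (y r) (y (r + 1)) ∧ A (y (r + 1)) (x 0) := by
  haveI : NeZero n := ⟨by omega⟩
  haveI : NeZero m := ⟨by omega⟩
  push_neg at hngp
  by_contra hgoal
  push_neg at hgoal
  -- propagation helpers
  have keyF : ∀ {k : ℕ} (P : ZMod k → Prop) [NeZero k] (r : ZMod k),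
      P r → (∀ t, P t → P (t + 1)) → ∀ t, P t := by
    intro k P _ r h0 hstep t
    obtain ⟨j, hj⟩ := ZMod.natCast_zmod_surjective (t - r)
    have hall : ∀ j : ℕ, P (r + (j : ZMod k)) := by
      intro j
      induction j with
      | zero => simpa using h0
      | succ j ih =>
        have := hstep _ ih
        have e : r + ((j + 1 : ℕ) : ZMod k) = (r + (j : ZMod k)) + 1 := by
          push_cast; ring
        rwa [e]
    have := hall j
    rwa [hj, add_sub_cancel] at this
  have keyB : ∀ {k : ℕ} (P : ZMod k → Prop) [NeZero k] (r : ZMod k),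
      P r → (∀ t, P t → P (t - 1)) → ∀ t, P t := by
    intro k P _ r h0 hstep t
    obtain ⟨j, hj⟩ := ZMod.natCast_zmod_surjective (r - t)
    have hall : ∀ j : ℕ, P (r - (j : ZMod k)) := by
      intro j
      induction j with
      | zero => simpa using h0
      | succ j ih =>
        have := hstep _ ih
        have e : r - ((j + 1 : ℕ) : ZMod k) = (r - (j : ZMod k)) - 1 := by
          push_cast; ring
        rwa [e]
    have := hall j
    rwa [hj, sub_sub_cancel] at this
  by_cases hA : ∃ r, A (x 0) (y r)
  · -- all arcs x → y
    obtain ⟨r0, hr0⟩ := hA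
    have all0 : ∀ t, A (x 0) (y t) := by
      refine keyF _ r0 hr0 ?_
      intro t ht
      have hne := hgoal t ht (hycyc t)
      rcases hone 0 (t + 1) with ⟨h1, _⟩ | ⟨h1, h2⟩
      · exact h1
      · exact absurd h1 hne
    have allS : ∀ s t, A (x s) (y t) := by
      refine keyF (fun s => ∀ t, A (x s) (y t)) 0 all0 ?_
      intro s hs t
      have hno : ¬ A (y t) (x (s + 1)) := by
        have := hngp s (t + 1) (hs (t + 1))
        simpa using this
      rcases hone (s + 1) t with ⟨h1, _⟩ | ⟨h1, _⟩
      · exact h1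
      · exact absurd h1 hno
    -- no arc y → x, so y 0 cannot reach x 0
    have hreach := hstrong (y 0) (x 0) (Ne.symm (hdisj 0 0))
    have hinv : ∀ v, Relation.ReflTransGen A (y 0) v → ∃ t, y t = v := by
      intro v hv
      induction hv with
      | refl => exact ⟨0, rfl⟩
      | @tail b c hp ha ih =>
        obtain ⟨t, rfl⟩ := ih
        rcases hcov c with ⟨s, rfl⟩ | ⟨t', rfl⟩
        · rcases hone s t with ⟨_, h2⟩ | ⟨_, h2⟩
          · exact absurd ha h2
          · exact absurd (allS s t) h2
        · exact ⟨t', rfl⟩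
    obtain ⟨t, ht⟩ := hinv _ hreach
    exact hdisj 0 t ht.symm
  · -- all arcs y → x
    push_neg at hA
    have all0 : ∀ t, A (y t) (x 0) := by
      intro t
      rcases hone 0 t with ⟨h1, _⟩ | ⟨h1, _⟩
      · exact absurd h1 (hA t)
      · exact h1
    have allS : ∀ s t, A (y t) (x s) := by
      refine keyB (fun s => ∀ t, A (y t) (x s)) 0 all0 ?_
      intro s hs t
      have hno : ¬ A (x (s - 1)) (y t) := by
        intro hx
        have := hngp (s - 1) t hx
        have := this
        rw [sub_add_cancel] at this
        exact this (hs (t - 1))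
      rcases hone (s - 1) t with ⟨h1, _⟩ | ⟨h1, _⟩
      · exact absurd h1 hno
      · exact h1
    have hreach := hstrong (x 0) (y 0) (hdisj 0 0)
    have hinv : ∀ v, Relation.ReflTransGen A (x 0) v → ∃ s, x s = v := by
      intro v hv
      induction hv with
      | refl => exact ⟨0, rfl⟩
      | @tail b c hp ha ih =>
        obtain ⟨s, rfl⟩ := ih
        rcases hcov c with ⟨s', rfl⟩ | ⟨t, rfl⟩
        · exact ⟨s', rfl⟩
        · rcases hone s t with ⟨_, h2⟩ | ⟨_, h2⟩
          · exact absurd (allS s t) h2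
          · exact absurd ha h2
    obtain ⟨s, hs⟩ := hinv _ hreach
    exact hdisj s 0 hs
end

section
/- Let D be a strong generalized sum of two vertex-disjoint digraphs D₁, D₂ with Hamiltonian cycles C₁ of length n and C₂ of length m. If D contains no good pair of arcs between C₁ and C₂, then for each vertex v of D and each integer t with 3 ≤ t ≤ 2·min(n,m), D contains a directed cycle of length t passing through v. -/
/-!
Since there is no good pair, an arc `x s → y r` forces the arc `x (s + 1) → y (r - 1)`. Hence the
direction of the arc between `x s` and `y r` is constant along the orbits of
`(s, r) ↦ (s + 1, r - 1)`, and each orbit meets every row `{s} × ZMod m`. Strong connectivity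
gives arcs in both directions between the two cycles, so the row of any `x s` contains a
descent `x s → y c`, `y (c + 1) → x s` and an ascent `y d → x s`, `x s → y (d + 1)`.
A cycle of odd length `2a + 3` through `x s` is then `x s, …, x (s + a), y (c - a), …, y (c + 1)`,
and one of even length `2e + 4` is
`x s, …, x (s + a), y (c - a), x (s + a + 1), …, x (s + e + 1), y (d - e), …, y d`,
where `a ≤ e` is chosen so that `y (c - a)` is not on the last run.
Vertices of `C₂` are handled by exchanging the roles of the two cycles.
-/

/-- A directed cycle of length `k` passing through `v` in the digraph with arc relation `A`. -/
def CycleThru {V : Type*} (A : V → V → Prop) (k : ℕ) (v : V) : Prop :=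
  ∃ z : ZMod k → V, Function.Injective z ∧ (∀ i, A (z i) (z (i + 1))) ∧ ∃ i, z i = v

theorem Relation.ReflTransGen.exists_rel_of_not {α : Type*} {r : α → α → Prop} {p : α → Prop}
    {a b : α} (h : Relation.ReflTransGen r a b) (ha : p a) (hb : ¬ p b) :
    ∃ c d, p c ∧ ¬ p d ∧ r c d := by
  induction h with
  | refl => exact absurd ha hb
  | @tail c d _ hcd ih =>
    by_cases hc : p c
    · exact ⟨c, d, hc, hb, hcd⟩
    · exact ih hc

namespace ZMod

theorem exists_apply_and_not_apply_add_one {m : ℕ} [NeZero m] {p : ZMod m → Prop} {a b : ZMod m}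
    (ha : p a) (hb : ¬ p b) : ∃ c, p c ∧ ¬ p (c + 1) := by
  by_contra! hstep
  have hall : ∀ j : ℕ, p (a + j) := by
    intro j
    induction j with
    | zero => simpa using ha
    | succ j ih => simpa [add_assoc] using hstep _ ih
  exact hb (by simpa using hall (b - a).val)

theorem exists_natCast_eq_intCast (n m : ℕ) [NeZero n] [NeZero m] (k : ℤ) :
    ∃ j : ℕ, (j : ZMod n) = k ∧ (j : ZMod m) = k :=
  ⟨(k : ZMod (n * m)).val,
    by rw [natCast_val, cast_intCast (dvd_mul_right n m)],
    by rw [natCast_val, cast_intCast (dvd_mul_left m n)]⟩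

theorem exists_le_forall_sub_ne_sub_add {m : ℕ} [NeZero m] {c d : ZMod m} (hcd : c ≠ d) {e : ℕ}
    (he : e + 2 ≤ m) : ∃ a ≤ e, ∀ j ≤ e, c - a ≠ d - e + j := by
  set k := (c - d).val
  have hkd : (k : ZMod m) = c - d := natCast_zmod_val _
  have hk0 : k ≠ 0 := fun h0 => hcd (sub_eq_zero.mp ((val_eq_zero _).mp h0))
  have hkm : k < m := val_lt _
  set a := k + e + 1 - m
  -- `(c - a) - (d - e) ≡ k + e - a`, which lies strictly between `e` and `m`
  refine ⟨a, by omega, fun j hj h => ?_⟩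
  obtain ⟨u, hu, hu0, hum⟩ : ∃ u, k + e = a + j + u ∧ 0 < u ∧ u < m :=
    ⟨k + e - a - j, by omega, by omega, by omega⟩
  have hcast : (k : ZMod m) + e = a + j + u := by exact_mod_cast congrArg Nat.cast hu
  have hu' : (u : ZMod m) = 0 := by linear_combination h + hkd - hcast
  exact absurd (Nat.le_of_dvd hu0 ((natCast_eq_zero_iff u m).mp hu')) (by omega)

end ZMod

section AntidiagonalShift
variable {n m : ℕ} {P : ZMod n → ZMod m → Prop}

theorem rel_add_natCast_of_rel (hP : ∀ s r, P s r → P (s + 1) (r - 1)) (j : ℕ) {s : ZMod n}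
    {r : ZMod m} (h : P s (r + j)) : P (s + j) r := by
  induction j generalizing r with
  | zero => simpa using h
  | succ j ih =>
    have := hP _ _ (ih (r := r + 1) (by rwa [add_right_comm, add_assoc, ← Nat.cast_succ]))
    simpa [add_assoc] using this

theorem rel_add_intCast_iff [NeZero n] [NeZero m] (hP : ∀ s r, P s r → P (s + 1) (r - 1))
    (k : ℤ) (s : ZMod n) (r : ZMod m) : P (s + k) r ↔ P s (r + k) := by
  have key : ∀ (k : ℤ) s r, P s (r + k) → P (s + k) r := fun k s r h => by
    obtain ⟨j, hjn, hjm⟩ := ZMod.exists_natCast_eq_intCast n m k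
    rw [← hjn]; rw [← hjm] at h
    exact rel_add_natCast_of_rel hP j h
  refine ⟨fun h => ?_, key k s r⟩
  simpa using key (-k) (s + k) (r + k) (by simpa using h)

theorem exists_rel_row_iff [NeZero n] [NeZero m] (hP : ∀ s r, P s r → P (s + 1) (r - 1))
    (s s' : ZMod n) (r : ZMod m) : ∃ r', (P s' r' ↔ P s r) := by
  refine ⟨r + (s - s').val, ?_⟩
  simpa using (rel_add_intCast_iff hP (s - s').val s' r).symm

end AntidiagonalShift

section Cycles
variable {V : Type*} {A : V → V → Prop}

theorem cycleThru_of_isChain {l : List V} {v : V} (hnd : l.Nodup) (hv : l.head? = some v)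
    (hc : (l ++ [v]).IsChain A) : CycleThru A l.length v := by
  cases l with
  | nil => simp at hv
  | cons w l =>
    obtain rfl : v = w := by simpa using hv.symm
    refine ⟨fun i => (v :: l)[i.val]'(ZMod.val_lt i), fun i j hij => ZMod.val_injective _ ?_,
      fun i => ?_, 0, by simp⟩
    · simpa using
        hnd.injective_get (a₁ := ⟨i.val, ZMod.val_lt i⟩) (a₂ := ⟨j.val, ZMod.val_lt j⟩) hij
    have hlt := ZMod.val_lt i
    have hi := List.isChain_iff_getElem.mp hc i.val (by simp at hlt ⊢; omega)
    simp only [ZMod.val_add, ZMod.val_one_eq_one_mod, Nat.add_mod_mod]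
    rcases Nat.lt_or_ge (i.val + 1) (v :: l).length with hnext | hwrap
    · simp only [Nat.mod_eq_of_lt hnext]
      rwa [List.getElem_append_left hlt, List.getElem_append_left hnext] at hi
    · have hval : i.val = l.length := by simp at hlt hwrap; omega
      have hlen : i.val + 1 = (v :: l).length := by simp [hval]
      rw [List.getElem_append_left hlt, List.getElem_append_right (by omega)] at hi
      simpa only [hlen, Nat.mod_self, List.length_cons, Nat.sub_self, List.getElem_cons_zero]
        using hi

def cycleRun {n : ℕ} (x : ZMod n → V) (s : ZMod n) (a : ℕ) : List V :=
  (List.range a).map fun i : ℕ => x (s + i)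

section Runs
variable {n : ℕ} {x : ZMod n → V} {s : ZMod n} {a : ℕ}

@[simp]
theorem mem_cycleRun {v : V} : v ∈ cycleRun x s a ↔ ∃ i < a, x (s + i) = v := by
  simp [cycleRun]

@[simp]
theorem length_cycleRun : (cycleRun x s a).length = a := by
  simp [cycleRun]

@[simp]
theorem head?_cycleRun_succ : (cycleRun x s (a + 1)).head? = some (x s) := by
  simp [cycleRun, List.head?_range]

@[simp]
theorem getLast?_cycleRun_succ : (cycleRun x s (a + 1)).getLast? = some (x (s + a)) := by
  simp [cycleRun, List.getLast?_range]

theorem cycleRun_add (b : ℕ) : cycleRun x s (a + b) = cycleRun x s a ++ cycleRun x (s + a) b := by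
  simp [cycleRun, List.range_add, add_assoc]

theorem isChain_cycleRun (hx : ∀ i, A (x i) (x (i + 1))) : (cycleRun x s a).IsChain A := by
  refine List.isChain_iff_getElem.mpr fun i hi => ?_
  simpa [cycleRun, add_assoc] using hx (s + i)

theorem nodup_cycleRun (hx : Function.Injective x) (ha : a ≤ n) : (cycleRun x s a).Nodup := by
  refine List.Nodup.map_on (fun i hi j hj hij => ?_) List.nodup_range
  simp only [List.mem_range] at hi hj
  have hcast : (i : ZMod n) = j := add_left_cancel (hx hij)
  rw [← ZMod.val_cast_of_lt (hi.trans_le ha), ← ZMod.val_cast_of_lt (hj.trans_le ha), hcast]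

end Runs

section GeneralizedSum
variable {n m : ℕ} {x : ZMod n → V} {y : ZMod m → V}

theorem cycleThru_two_runs (hxinj : Function.Injective x) (hyinj : Function.Injective y)
    (hxcyc : ∀ i, A (x i) (x (i + 1))) (hycyc : ∀ i, A (y i) (y (i + 1)))
    (hdisj : ∀ s t, x s ≠ y t) {a b : ℕ} (ha : a < n) (hb : b < m) {s : ZMod n} {r : ZMod m}
    (hxy : A (x (s + a)) (y r)) (hyx : A (y (r + b)) (x s)) :
    CycleThru A (a + b + 2) (x s) := by
  have hcyc := cycleThru_of_isChain (A := A) (v := x s)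
    (l := cycleRun x s (a + 1) ++ cycleRun y r (b + 1))
    (List.nodup_append.mpr ⟨nodup_cycleRun hxinj ha, nodup_cycleRun hyinj hb, by
      simp only [mem_cycleRun]; rintro _ ⟨i, -, rfl⟩ _ ⟨j, -, rfl⟩; exact hdisj _ _⟩)
    (by simp)
    (((isChain_cycleRun hxcyc).append (isChain_cycleRun hycyc) (by simpa using hxy)).append
      (.singleton _) (by simpa using hyx))
  simpa [add_add_add_comm] using hcyc

theorem cycleThru_four_runs (hxinj : Function.Injective x) (hyinj : Function.Injective y)
    (hxcyc : ∀ i, A (x i) (x (i + 1))) (hycyc : ∀ i, A (y i) (y (i + 1)))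
    (hdisj : ∀ s t, x s ≠ y t) {a b c e : ℕ} (hac : a + c + 2 ≤ n) (hb : b < m) (he : e < m)
    {s : ZMod n} {r q : ZMod m} (hrq : ∀ i ≤ b, ∀ j ≤ e, r + i ≠ q + j)
    (h₁ : A (x (s + a)) (y r)) (h₂ : A (y (r + b)) (x (s + (a + 1))))
    (h₃ : A (x (s + (a + 1) + c)) (y q)) (h₄ : A (y (q + e)) (x s)) :
    CycleThru A (a + b + c + e + 4) (x s) := by
  set X₁ := cycleRun x s (a + 1)
  set X₂ := cycleRun x (s + (a + 1)) (c + 1)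
  set Y₁ := cycleRun y r (b + 1)
  set Y₂ := cycleRun y q (e + 1)
  have hX : (X₁ ++ X₂).Nodup := by
    have : X₁ ++ X₂ = cycleRun x s (a + 1 + (c + 1)) := by simp [X₁, X₂, cycleRun_add]
    rw [this]; exact nodup_cycleRun hxinj (by omega)
  have hY : (Y₁ ++ Y₂).Nodup := List.nodup_append.mpr ⟨nodup_cycleRun hyinj (by omega),
    nodup_cycleRun hyinj (by omega), by
      simp only [Y₁, Y₂, mem_cycleRun]
      rintro _ ⟨i, hi, rfl⟩ _ ⟨j, hj, rfl⟩ hij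
      exact hrq i (by omega) j (by omega) (hyinj hij)⟩
  have hXY : (X₁ ++ X₂ ++ (Y₁ ++ Y₂)).Nodup := List.nodup_append.mpr ⟨hX, hY, by
    simp only [X₁, X₂, Y₁, Y₂, List.mem_append, mem_cycleRun]
    rintro _ (⟨i, -, rfl⟩ | ⟨i, -, rfl⟩) _ (⟨j, -, rfl⟩ | ⟨j, -, rfl⟩) <;> exact hdisj _ _⟩
  have hcyc := cycleThru_of_isChain (A := A) (v := x s) (l := X₁ ++ (Y₁ ++ (X₂ ++ Y₂)))
    (by
      refine (List.Perm.nodup_iff ?_).mp hXY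
      rw [List.append_assoc]
      exact (List.perm_append_comm_assoc Y₁ X₂ Y₂).symm.append_left X₁)
    (by simp [X₁])
    (by
      simp only [← List.append_assoc]
      refine ((((isChain_cycleRun hxcyc).append (isChain_cycleRun hycyc) ?_).append
        (isChain_cycleRun hxcyc) ?_).append (isChain_cycleRun hycyc) ?_).append (.singleton _) ?_
      · simpa [X₁, Y₁] using h₁
      · simpa [Y₁, X₂] using h₂
      · simpa [X₂, Y₂] using h₃
      · simpa [Y₂] using h₄)
  convert hcyc using 1
  simp only [X₁, X₂, Y₁, Y₂, List.length_append, length_cycleRun]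
  omega

theorem exists_arc_of_reflTransGen (hdisj : ∀ s t, x s ≠ y t)
    (hcov : ∀ v : V, (∃ s, x s = v) ∨ (∃ t, y t = v)) {s : ZMod n} {r : ZMod m}
    (h : Relation.ReflTransGen A (x s) (y r)) : ∃ s r, A (x s) (y r) := by
  obtain ⟨_, w, ⟨s, rfl⟩, hw, hsw⟩ :=
    h.exists_rel_of_not (p := (· ∈ Set.range x)) ⟨s, rfl⟩ fun ⟨s', hs'⟩ => hdisj s' r hs'
  obtain ⟨r, rfl⟩ := (hcov w).resolve_left hw
  exact ⟨s, r, hsw⟩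

theorem arc_succ_pred_of_not_goodPair (hone : ∀ s r, Xor (A (x s) (y r)) (A (y r) (x s)))
    (hngp : ¬ ∃ (s : ZMod n) (r : ZMod m), A (x s) (y r) ∧ A (y (r - 1)) (x (s + 1)))
    (s : ZMod n) (r : ZMod m) (h : A (x s) (y r)) : A (x (s + 1)) (y (r - 1)) :=
  (xor_iff_iff_not.mp (hone _ _)).mpr fun h' => hngp ⟨s, r, h, h'⟩

theorem arc_pred_succ_of_arc_succ_pred (hone : ∀ s r, Xor (A (x s) (y r)) (A (y r) (x s)))
    (hshift : ∀ s r, A (x s) (y r) → A (x (s + 1)) (y (r - 1)))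
    (r : ZMod m) (s : ZMod n) (h : A (y r) (x s)) : A (y (r + 1)) (x (s - 1)) :=
  (xor_iff_not_iff'.mp (hone _ _)).mp fun h' =>
    (xor_iff_iff_not.mp (hone s r)).mp (by simpa using hshift _ _ h') h

theorem cycleThru_odd_of_descent (hxinj : Function.Injective x) (hyinj : Function.Injective y)
    (hxcyc : ∀ i, A (x i) (x (i + 1))) (hycyc : ∀ i, A (y i) (y (i + 1)))
    (hdisj : ∀ s t, x s ≠ y t) (hone : ∀ s r, Xor (A (x s) (y r)) (A (y r) (x s)))
    (hshift : ∀ s r, A (x s) (y r) → A (x (s + 1)) (y (r - 1)))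
    {s : ZMod n} {c : ZMod m} (hc : A (x s) (y c)) (hc' : ¬ A (x s) (y (c + 1)))
    {a : ℕ} (ha : a < n) (ha' : a + 1 < m) : CycleThru A (2 * a + 3) (x s) := by
  have hxy : A (x (s + a)) (y (c - a)) :=
    rel_add_natCast_of_rel (P := fun s r => A (x s) (y r)) hshift a (by simpa using hc)
  have hyx : A (y (c - a + (a + 1 : ℕ))) (x s) :=
    (xor_iff_not_iff'.mp (hone _ _)).mp (by rwa [Nat.cast_succ, ← add_assoc, sub_add_cancel])
  simpa [two_mul, add_assoc] using
    cycleThru_two_runs hxinj hyinj hxcyc hycyc hdisj ha ha' hxy hyx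

theorem cycleThru_even_of_descent_ascent [NeZero n] [NeZero m]
    (hxinj : Function.Injective x) (hyinj : Function.Injective y)
    (hxcyc : ∀ i, A (x i) (x (i + 1))) (hycyc : ∀ i, A (y i) (y (i + 1)))
    (hdisj : ∀ s t, x s ≠ y t) (hone : ∀ s r, Xor (A (x s) (y r)) (A (y r) (x s)))
    (hshift : ∀ s r, A (x s) (y r) → A (x (s + 1)) (y (r - 1)))
    {s : ZMod n} {c d : ZMod m} (hc : A (x s) (y c)) (hc' : ¬ A (x s) (y (c + 1)))
    (hd : ¬ A (x s) (y d)) (hd' : A (x s) (y (d + 1)))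
    {e : ℕ} (hn : e + 2 ≤ n) (hm : e + 2 ≤ m) : CycleThru A (2 * e + 4) (x s) := by
  obtain ⟨a, hae, hrq⟩ :=
    ZMod.exists_le_forall_sub_ne_sub_add (c := c) (d := d) (fun h => hd (h ▸ hc)) hm
  obtain ⟨b, rfl⟩ := Nat.exists_eq_add_of_le hae
  have hrq' : ∀ i ≤ 0, ∀ j ≤ a + b, c - a + (i : ℕ) ≠ d - (a + b : ℕ) + j := by
    rintro i hi j hj
    obtain rfl := Nat.le_zero.mp hi
    simpa using hrq j hj
  have h₁ : A (x (s + a)) (y (c - a)) :=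
    rel_add_natCast_of_rel (P := fun s r => A (x s) (y r)) hshift a (by simpa using hc)
  have h₂ : A (y (c - a + (0 : ℕ))) (x (s + (a + 1))) := by
    refine (xor_iff_not_iff'.mp (hone _ _)).mp fun h => hc' ?_
    have := (rel_add_intCast_iff (P := fun s r => A (x s) (y r)) hshift (a + 1 : ℕ) s (c - a)).mp
      (by simpa using h)
    rwa [show c - a + (((a + 1 : ℕ) : ℤ) : ZMod m) = c + 1 by push_cast; ring] at this
  have h₃ : A (x (s + (a + 1) + b)) (y (d - (a + b : ℕ))) := by
    have := rel_add_natCast_of_rel (P := fun s r => A (x s) (y r)) hshift (a + 1 + b)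
      (s := s) (r := d - (a + b : ℕ))
      (by rwa [show d - ((a + b : ℕ) : ZMod m) + ((a + 1 + b : ℕ) : ZMod m) = d + 1 by
        push_cast; ring])
    simpa [add_assoc] using this
  have h₄ : A (y (d - (a + b : ℕ) + (a + b : ℕ))) (x s) :=
    (xor_iff_not_iff'.mp (hone _ _)).mp (by simpa using hd)
  convert cycleThru_four_runs hxinj hyinj hxcyc hycyc hdisj (by omega) (by omega) (by omega)
    hrq' h₁ h₂ h₃ h₄ using 2
  ring

theorem cycleThru_left_vertex (hxinj : Function.Injective x) (hyinj : Function.Injective y)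
    (hxcyc : ∀ i, A (x i) (x (i + 1))) (hycyc : ∀ i, A (y i) (y (i + 1)))
    (hdisj : ∀ s t, x s ≠ y t) (hone : ∀ s r, Xor (A (x s) (y r)) (A (y r) (x s)))
    (hshift : ∀ s r, A (x s) (y r) → A (x (s + 1)) (y (r - 1)))
    (hxy : ∃ s r, A (x s) (y r)) (hyx : ∃ s r, A (y r) (x s))
    (s : ZMod n) {t : ℕ} (ht : 3 ≤ t) (htn : t ≤ 2 * n) (htm : t ≤ 2 * m) :
    CycleThru A t (x s) := by
  have : NeZero n := ⟨by omega⟩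
  have : NeZero m := ⟨by omega⟩
  obtain ⟨s₁, r₁, h₁⟩ := hxy
  obtain ⟨s₂, r₂, h₂⟩ := hyx
  obtain ⟨r₁', hr₁⟩ := exists_rel_row_iff (P := fun s r => A (x s) (y r)) hshift s₁ s r₁
  obtain ⟨r₂', hr₂⟩ := exists_rel_row_iff (P := fun s r => A (x s) (y r)) hshift s₂ s r₂
  have hpos : A (x s) (y r₁') := hr₁.mpr h₁
  have hneg : ¬ A (x s) (y r₂') := hr₂.not.mpr fun h => (xor_iff_iff_not.mp (hone _ _)).mp h h₂
  obtain ⟨c, hc, hc'⟩ :=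
    ZMod.exists_apply_and_not_apply_add_one (p := fun r => A (x s) (y r)) hpos hneg
  obtain ⟨d, hd, hd'⟩ :=
    ZMod.exists_apply_and_not_apply_add_one (p := fun r => ¬ A (x s) (y r)) hneg (not_not.mpr hpos)
  obtain ⟨h, rfl | rfl⟩ := Nat.even_or_odd' t
  · convert cycleThru_even_of_descent_ascent hxinj hyinj hxcyc hycyc hdisj hone hshift
      hc hc' hd (not_not.mp hd') (e := h - 2) (by omega) (by omega) using 1
    omega
  · convert cycleThru_odd_of_descent hxinj hyinj hxcyc hycyc hdisj hone hshift
      hc hc' (a := h - 1) (by omega) (by omega) using 1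
    omega

end GeneralizedSum

end Cycles

theorem stmt4_general {V : Type*} (A : V → V → Prop) {n m : ℕ}
    (x : ZMod n → V) (y : ZMod m → V)
    (hxinj : Function.Injective x) (hyinj : Function.Injective y)
    (hxcyc : ∀ i, A (x i) (x (i + 1))) (hycyc : ∀ i, A (y i) (y (i + 1)))
    (hdisj : ∀ s t, x s ≠ y t)
    (hcov : ∀ v : V, (∃ s, x s = v) ∨ (∃ t, y t = v))
    (hone : ∀ s t, Xor' (A (x s) (y t)) (A (y t) (x s)))
    (hstrong : ∀ u v : V, u ≠ v → Relation.ReflTransGen A u v)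
    (hngp : ¬ ∃ (s : ZMod n) (r : ZMod m), A (x s) (y r) ∧ A (y (r - 1)) (x (s + 1))) :
    ∀ v : V, ∀ t : ℕ, 3 ≤ t → t ≤ 2 * min n m → CycleThru A t v := by
  intro v t ht htnm
  have hdisj' : ∀ r s, y r ≠ x s := fun r s => (hdisj s r).symm
  have hone' : ∀ r s, Xor (A (y r) (x s)) (A (x s) (y r)) := fun r s => xor_comm _ _ ▸ hone s r
  have hshift := arc_succ_pred_of_not_goodPair hone hngp
  obtain ⟨s₁, r₁, h₁⟩ := exists_arc_of_reflTransGen hdisj hcov (hstrong _ _ (hdisj 0 0))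
  obtain ⟨r₂, s₂, h₂⟩ :=
    exists_arc_of_reflTransGen hdisj' (fun v => (hcov v).symm) (hstrong _ _ (hdisj' 0 0))
  rcases hcov v with ⟨s, rfl⟩ | ⟨r, rfl⟩
  · exact cycleThru_left_vertex hxinj hyinj hxcyc hycyc hdisj hone hshift
      ⟨s₁, r₁, h₁⟩ ⟨s₂, r₂, h₂⟩ s ht (by omega) (by omega)
  · exact cycleThru_left_vertex hyinj hxinj hycyc hxcyc hdisj' hone'
      (arc_pred_succ_of_arc_succ_pred hone hshift) ⟨r₂, s₂, h₂⟩ ⟨r₁, s₁, h₁⟩ r ht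
      (by omega) (by omega)

/-- In a strong generalized sum of two Hamiltonian digraphs with no good pair,
every vertex lies on a cycle of each length t with 3 ≤ t ≤ 2·min(n,m). -/
theorem stmt4 {V : Type*} (A : V → V → Prop) {n m : ℕ}
    (hn : 2 ≤ n) (hm : 2 ≤ m)
    (x : ZMod n → V) (y : ZMod m → V)
    (hxinj : Function.Injective x) (hyinj : Function.Injective y)
    (hxcyc : ∀ i, A (x i) (x (i + 1))) (hycyc : ∀ i, A (y i) (y (i + 1)))
    (hdisj : ∀ s t, x s ≠ y t)
    (hcov : ∀ v : V, (∃ s, x s = v) ∨ (∃ t, y t = v))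
    (hone : ∀ s t, Xor' (A (x s) (y t)) (A (y t) (x s)))
    (hstrong : ∀ u v : V, u ≠ v → Relation.ReflTransGen A u v)
    (hngp : ¬ ∃ (s : ZMod n) (r : ZMod m), A (x s) (y r) ∧ A (y (r - 1)) (x (s + 1))) :
    ∀ v : V, ∀ t : ℕ, 3 ≤ t → t ≤ 2 * min n m → CycleThru A t v :=
  stmt4_general A x y hxinj hyinj hxcyc hycyc hdisj hcov hone hstrong hngp
end

section
/- Let D be a strong generalized sum of two vertex-disjoint digraphs D₁, D₂ with Hamiltonian cycles C₁ of length n and C₂ of length m. If D contains no good pair of arcs between C₁ and C₂, then for each vertex v of D and each integer t with min(n,m)+2 ≤ t ≤ n+m, D contains a directed cycle of length t passing through v. -/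
private lemma keyodd (g lo : ℕ) (c : ℤ) (hg : 0 < g) (hodd : g % 2 = 1) :
    (g:ℤ) ∣ 2*((lo:ℤ) + ((c - 2*lo) * (((g:ℤ)+1)/2)) % g) - c := by
  set w : ℤ := (c - 2*(lo:ℤ)) * (((g:ℤ)+1)/2) with hw
  obtain ⟨K, hK⟩ : ∃ K, w % g = w - g * K := ⟨w / g, by rw [Int.emod_def]⟩
  have h2 : 2 * (((g:ℤ)+1)/2) = (g:ℤ)+1 := by omega
  have h2w : 2*w = (c-2*(lo:ℤ))*((g:ℤ)+1) := by
    rw [hw]; linear_combination (c-2*(lo:ℤ))*h2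
  refine ⟨c - 2*lo - 2*K, ?_⟩
  rw [hK]
  linear_combination h2w

private lemma keyeven (g lo : ℕ) (c : ℤ) (hg : 0 < g) (heven : g % 2 = 0) (hc : c % 2 = 0) :
    (g:ℤ) ∣ 2*((lo:ℤ) + (c/2 - lo) % ((g:ℤ)/2)) - c := by
  obtain ⟨K, hK⟩ : ∃ K, (c/2 - (lo:ℤ)) % ((g:ℤ)/2) = (c/2 - lo) - ((g:ℤ)/2) * K :=
    ⟨(c/2 - lo) / ((g:ℤ)/2), by rw [Int.emod_def]⟩
  have h2 : 2 * ((g:ℤ)/2) = (g:ℤ) := by omega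
  have hcc : 2 * (c/2) = c := by omega
  refine ⟨-K, ?_⟩
  rw [hK]
  linear_combination -K * h2 - hcc + 2*hcc

lemma window1 (g lo hi : ℕ) (c : ℤ) (hg : 0 < g)
    (h : (g % 2 = 1 ∧ lo + g ≤ hi + 1) ∨ (g % 2 = 0 ∧ c % 2 = 0 ∧ 2*lo + g ≤ 2*hi + 2)) :
    ∃ i : ℕ, lo ≤ i ∧ i ≤ hi ∧ (g:ℤ) ∣ 2*(i:ℤ) - c := by
  rcases h with ⟨hodd, hwin⟩ | ⟨heven, hc, hwin⟩
  · set u : ℤ := ((c - 2*(lo:ℤ)) * (((g:ℤ)+1)/2)) % g with hu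
    have hu0 : 0 ≤ u := Int.emod_nonneg _ (by exact_mod_cast hg.ne')
    have hult : u < g := Int.emod_lt_of_pos _ (by exact_mod_cast hg)
    refine ⟨lo + u.toNat, by omega, by omega, ?_⟩
    have hcast : ((lo + u.toNat : ℕ) : ℤ) = (lo:ℤ) + u := by
      push_cast [Int.toNat_of_nonneg hu0]; ring
    rw [hcast]
    exact keyodd g lo c hg hodd
  · set u : ℤ := (c/2 - (lo:ℤ)) % ((g:ℤ)/2) with hu
    have hgh : (0:ℤ) < (g:ℤ)/2 := by omega
    have hu0 : 0 ≤ u := Int.emod_nonneg _ (by omega)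
    have hult : u < (g:ℤ)/2 := Int.emod_lt_of_pos _ hgh
    refine ⟨lo + u.toNat, by omega, by omega, ?_⟩
    have hcast : ((lo + u.toNat : ℕ) : ℤ) = (lo:ℤ) + u := by
      push_cast [Int.toNat_of_nonneg hu0]; ring
    rw [hcast]
    exact keyeven g lo c hg heven hc

lemma window2 (g lo hi : ℕ) (c : ℤ) (hg : 2 ≤ g) (hpar : g % 2 = 0 → c % 2 = 0)
    (h : lo + g ≤ hi + 2) :
    ∃ i : ℕ, lo ≤ i ∧ i ≤ hi ∧ ((g:ℤ) ∣ 2*(i:ℤ) - c ∨ (i = lo ∧ (g:ℤ) ∣ 2*(i:ℤ) - (c+2))) := by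
  rcases Nat.even_or_odd g with hge | hgo
  · have heg : g % 2 = 0 := Nat.even_iff.mp hge
    obtain ⟨i, h1, h2, h3⟩ := window1 g lo hi c (by omega) (Or.inr ⟨heg, hpar heg, by omega⟩)
    exact ⟨i, h1, h2, Or.inl h3⟩
  · have hog : g % 2 = 1 := Nat.odd_iff.mp hgo
    set u : ℤ := ((c - 2*(lo:ℤ)) * (((g:ℤ)+1)/2)) % g with hu
    have hg' : (0:ℤ) < g := by exact_mod_cast (by omega : 0 < g)
    have hu0 : 0 ≤ u := Int.emod_nonneg _ (by omega)
    have hult : u < g := Int.emod_lt_of_pos _ hg'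
    have htn : (u.toNat : ℤ) = u := Int.toNat_of_nonneg hu0
    have hkey : (g:ℤ) ∣ 2*((lo:ℤ) + u) - c := keyodd g lo c (by omega) hog
    by_cases hcase : lo + u.toNat ≤ hi
    · refine ⟨lo + u.toNat, by omega, hcase, Or.inl ?_⟩
      have hcast : ((lo + u.toNat : ℕ) : ℤ) = (lo:ℤ) + u := by
        push_cast [Int.toNat_of_nonneg hu0]; ring
      rw [hcast]; exact hkey
    · -- u = g - 1 forced
      have hu1 : u = (g:ℤ) - 1 := by omega
      refine ⟨lo, le_refl _, by omega, Or.inr ⟨rfl, ?_⟩⟩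
      obtain ⟨M, hM⟩ := hkey
      refine ⟨M - 2, ?_⟩
      rw [hu1] at hM
      linear_combination hM


lemma build2 {V : Type*} (A : V → V → Prop) {n m : ℕ} [NeZero n] [NeZero m]
    (x : ZMod n → V) (y : ZMod m → V)
    (hxinj : Function.Injective x) (hyinj : Function.Injective y)
    (hxcyc : ∀ i, A (x i) (x (i + 1))) (hycyc : ∀ i, A (y i) (y (i + 1)))
    (hdisj : ∀ s t, x s ≠ y t)
    (i j t : ℕ) (hi1 : 1 ≤ i) (hin : i ≤ n) (hj1 : 1 ≤ j) (hjm : j ≤ m)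
    (ht : t = i + j) (a : ZMod n) (b : ZMod m)
    (h1 : A (x (a + ((i-1 : ℕ) : ZMod n))) (y b))
    (h2 : A (y (b + ((j-1 : ℕ) : ZMod m))) (x a)) :
    CycleThru A t (x a) ∧ CycleThru A t (y b) := by
  haveI : NeZero t := ⟨by omega⟩
  set z : ZMod t → V := fun idx =>
    if idx.val < i then x (a + (idx.val : ZMod n)) else y (b + ((idx.val - i : ℕ) : ZMod m))
    with hz
  have hinj : Function.Injective z := by
    intro p q hpq
    apply ZMod.val_injective
    have hp := ZMod.val_lt p; have hq := ZMod.val_lt q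
    simp only [hz] at hpq
    rcases Nat.lt_or_ge p.val i with c1 | c1 <;> rcases Nat.lt_or_ge q.val i with c2 | c2
    · rw [if_pos c1, if_pos c2] at hpq
      have h3 := add_left_cancel (hxinj hpq)
      have h4 := congrArg ZMod.val h3
      rwa [ZMod.val_cast_of_lt (lt_of_lt_of_le c1 hin),
        ZMod.val_cast_of_lt (lt_of_lt_of_le c2 hin)] at h4
    · rw [if_pos c1, if_neg (by omega)] at hpq
      exact absurd hpq (hdisj _ _)
    · rw [if_neg (by omega), if_pos c2] at hpq
      exact absurd hpq.symm (hdisj _ _)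
    · rw [if_neg (by omega), if_neg (by omega)] at hpq
      have h3 := add_left_cancel (hyinj hpq)
      have h4 := congrArg ZMod.val h3
      rw [ZMod.val_cast_of_lt (by omega : p.val - i < m),
        ZMod.val_cast_of_lt (by omega : q.val - i < m)] at h4
      omega
  have harc : ∀ p, A (z p) (z (p+1)) := by
    intro p
    have hp : p.val < t := ZMod.val_lt p
    have hv1 : (1 : ZMod t).val = 1 := by rw [ZMod.val_one_eq_one_mod]; exact Nat.mod_eq_of_lt (by omega)
    have hpadd : (p+1).val = (p.val + 1) % t := by rw [ZMod.val_add, hv1]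
    simp only [hz]
    rcases Nat.lt_or_ge (p.val + 1) i with c1 | c1
    · -- inside x block
      have e1 : (p+1).val = p.val + 1 := by rw [hpadd]; exact Nat.mod_eq_of_lt (by omega)
      rw [if_pos (by omega : p.val < i), e1, if_pos c1]
      have : ((p.val + 1 : ℕ) : ZMod n) = (p.val : ZMod n) + 1 := by push_cast; ring
      rw [this, ← add_assoc]
      exact hxcyc _
    rcases Nat.lt_or_ge (p.val + 1) t with c2 | c2
    · rcases Nat.eq_or_lt_of_le c1 with c3 | c3
      · -- boundary x -> y : p.val + 1 = i
        have e1 : (p+1).val = i := by rw [hpadd]; rw [show p.val + 1 = i from by omega]; exact Nat.mod_eq_of_lt (by omega)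
        rw [if_pos (by omega : p.val < i), e1, if_neg (by omega)]
        have e2 : (p.val : ZMod n) = ((i-1 : ℕ) : ZMod n) := by congr 1; omega
        have e3 : ((i - i : ℕ) : ZMod m) = 0 := by
          have : i - i = 0 := by omega
          rw [this]; simp
        rw [e2, e3, add_zero]
        exact h1
      · -- inside y block
        have e1 : (p+1).val = p.val + 1 := by rw [hpadd]; exact Nat.mod_eq_of_lt (by omega)
        rw [if_neg (by omega), e1, if_neg (by omega)]
        have : ((p.val + 1 - i : ℕ) : ZMod m) = ((p.val - i : ℕ) : ZMod m) + 1 := by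
          have e : p.val + 1 - i = (p.val - i) + 1 := by omega
          rw [e]; push_cast; ring
        rw [this, ← add_assoc]
        exact hycyc _
    · -- wrap: p.val = t - 1
      have e1 : (p+1).val = 0 := by
        rw [hpadd, show p.val + 1 = t from by omega]; exact Nat.mod_self t
      have e2 : ((p.val - i : ℕ) : ZMod m) = ((j-1 : ℕ) : ZMod m) := by congr 1; omega
      rw [e1, if_neg (by omega), if_pos (by omega : 0 < i), e2, Nat.cast_zero, add_zero]
      exact h2
  constructor
  · refine ⟨z, hinj, harc, 0, ?_⟩
    simp only [hz]
    rw [if_pos (by rw [ZMod.val_zero]; omega : (0 : ZMod t).val < i)]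
    rw [ZMod.val_zero]; simp
  · refine ⟨z, hinj, harc, (i : ZMod t), ?_⟩
    have e1 : ((i : ZMod t)).val = i := by
      rw [ZMod.val_natCast]; exact Nat.mod_eq_of_lt (by omega)
    simp only [hz]
    rw [if_neg (by omega), e1]
    have : ((i - i : ℕ) : ZMod m) = 0 := by
      have : i - i = 0 := by omega
      rw [this]; simp
    rw [this, add_zero]



lemma build4 {V : Type*} (A : V → V → Prop) {n m : ℕ} [NeZero n] [NeZero m]
    (x : ZMod n → V) (y : ZMod m → V)
    (hxinj : Function.Injective x) (hyinj : Function.Injective y)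
    (hxcyc : ∀ i, A (x i) (x (i + 1))) (hycyc : ∀ i, A (y i) (y (i + 1)))
    (hdisj : ∀ s t, x s ≠ y t)
    (i1 j1 i2 j2 g1 d1 t : ℕ)
    (hi1 : 1 ≤ i1) (hj1 : 1 ≤ j1) (hi2 : 1 ≤ i2) (hj2 : 1 ≤ j2)
    (hxb : i1 + g1 + i2 ≤ n) (hyb : j1 + d1 + j2 ≤ m)
    (ht : t = i1 + j1 + i2 + j2) (a : ZMod n) (b : ZMod m)
    (h1 : A (x (a + ((i1-1 : ℕ) : ZMod n))) (y b))
    (h2 : A (y (b + ((j1-1 : ℕ) : ZMod m))) (x (a + ((i1+g1 : ℕ) : ZMod n))))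
    (h3 : A (x (a + ((i1+g1+(i2-1) : ℕ) : ZMod n))) (y (b + ((j1+d1 : ℕ) : ZMod m))))
    (h4 : A (y (b + ((j1+d1+(j2-1) : ℕ) : ZMod m))) (x a)) :
    CycleThru A t (x a) ∧ CycleThru A t (y b) := by
  haveI : NeZero t := ⟨by omega⟩
  set o2 : ℕ := i1 + j1 with ho2
  set o3 : ℕ := i1 + j1 + i2 with ho3
  set z : ZMod t → V := fun idx =>
    if idx.val < i1 then x (a + (idx.val : ZMod n))
    else if idx.val < o2 then y (b + ((idx.val - i1 : ℕ) : ZMod m))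
    else if idx.val < o3 then x (a + ((i1 + g1 + (idx.val - o2) : ℕ) : ZMod n))
    else y (b + ((j1 + d1 + (idx.val - o3) : ℕ) : ZMod m))
    with hz
  have keyx : ∀ u u' : ℕ, u < n → u' < n →
      x (a + (u : ZMod n)) = x (a + (u' : ZMod n)) → u = u' := by
    intro u u' hu hu' h
    have h' := congrArg ZMod.val (add_left_cancel (hxinj h))
    rwa [ZMod.val_cast_of_lt hu, ZMod.val_cast_of_lt hu'] at h'
  have keyy : ∀ u u' : ℕ, u < m → u' < m →
      y (b + (u : ZMod m)) = y (b + (u' : ZMod m)) → u = u' := by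
    intro u u' hu hu' h
    have h' := congrArg ZMod.val (add_left_cancel (hyinj h))
    rwa [ZMod.val_cast_of_lt hu, ZMod.val_cast_of_lt hu'] at h'
  have hinj : Function.Injective z := by
    intro p q hpq
    apply ZMod.val_injective
    have hp := ZMod.val_lt p; have hq := ZMod.val_lt q
    simp only [hz] at hpq
    rcases Nat.lt_or_ge p.val i1 with c1 | c1 <;>
      [skip; rcases Nat.lt_or_ge p.val o2 with c1' | c1'] <;>
      [skip; skip; rcases Nat.lt_or_ge p.val o3 with c1'' | c1'']
    all_goals rcases Nat.lt_or_ge q.val i1 with c2 | c2 <;>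
      [skip; rcases Nat.lt_or_ge q.val o2 with c2' | c2'] <;>
      [skip; skip; rcases Nat.lt_or_ge q.val o3 with c2'' | c2'']
    -- 16 cases
    · rw [if_pos c1, if_pos c2] at hpq
      exact keyx _ _ (by omega) (by omega) hpq
    · rw [if_pos c1, if_neg (by omega), if_pos c2'] at hpq
      exact absurd hpq (hdisj _ _)
    · rw [if_pos c1, if_neg (by omega), if_neg (by omega), if_pos c2''] at hpq
      have := keyx _ _ (by omega) (by omega) hpq
      omega
    · rw [if_pos c1, if_neg (by omega), if_neg (by omega), if_neg (by omega)] at hpq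
      exact absurd hpq (hdisj _ _)
    · rw [if_neg (by omega), if_pos c1', if_pos c2] at hpq
      exact absurd hpq.symm (hdisj _ _)
    · rw [if_neg (by omega), if_pos c1', if_neg (by omega), if_pos c2'] at hpq
      have := keyy _ _ (by omega) (by omega) hpq
      omega
    · rw [if_neg (by omega), if_pos c1', if_neg (by omega), if_neg (by omega), if_pos c2''] at hpq
      exact absurd hpq.symm (hdisj _ _)
    · rw [if_neg (by omega), if_pos c1', if_neg (by omega), if_neg (by omega), if_neg (by omega)] at hpq
      have := keyy _ _ (by omega) (by omega) hpq
      omega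
    · rw [if_neg (by omega), if_neg (by omega), if_pos c1'', if_pos c2] at hpq
      have := keyx _ _ (by omega) (by omega) hpq
      omega
    · rw [if_neg (by omega), if_neg (by omega), if_pos c1'', if_neg (by omega), if_pos c2'] at hpq
      exact absurd hpq (hdisj _ _)
    · rw [if_neg (by omega), if_neg (by omega), if_pos c1'', if_neg (by omega), if_neg (by omega),
        if_pos c2''] at hpq
      have := keyx _ _ (by omega) (by omega) hpq
      omega
    · rw [if_neg (by omega), if_neg (by omega), if_pos c1'', if_neg (by omega), if_neg (by omega),
        if_neg (by omega)] at hpq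
      exact absurd hpq (hdisj _ _)
    · rw [if_neg (by omega), if_neg (by omega), if_neg (by omega), if_pos c2] at hpq
      exact absurd hpq.symm (hdisj _ _)
    · rw [if_neg (by omega), if_neg (by omega), if_neg (by omega), if_neg (by omega),
        if_pos c2'] at hpq
      have := keyy _ _ (by omega) (by omega) hpq
      omega
    · rw [if_neg (by omega), if_neg (by omega), if_neg (by omega), if_neg (by omega),
        if_neg (by omega), if_pos c2''] at hpq
      exact absurd hpq.symm (hdisj _ _)
    · rw [if_neg (by omega), if_neg (by omega), if_neg (by omega), if_neg (by omega),
        if_neg (by omega), if_neg (by omega)] at hpq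
      have := keyy _ _ (by omega) (by omega) hpq
      omega
  have harc : ∀ p, A (z p) (z (p+1)) := by
    intro p
    have hp : p.val < t := ZMod.val_lt p
    have hv1 : (1 : ZMod t).val = 1 := by
      rw [ZMod.val_one_eq_one_mod]; exact Nat.mod_eq_of_lt (by omega)
    have hpadd : (p+1).val = (p.val + 1) % t := by rw [ZMod.val_add, hv1]
    simp only [hz]
    rcases Nat.lt_or_ge (p.val + 1) i1 with c1 | c1
    · have e1 : (p+1).val = p.val + 1 := by rw [hpadd]; exact Nat.mod_eq_of_lt (by omega)
      rw [if_pos (by omega : p.val < i1), e1, if_pos c1]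
      have e2 : ((p.val + 1 : ℕ) : ZMod n) = (p.val : ZMod n) + 1 := by push_cast; ring
      rw [e2, ← add_assoc]
      exact hxcyc _
    rcases Nat.lt_or_ge (p.val + 1) o2 with c2 | c2
    · rcases Nat.eq_or_lt_of_le c1 with c3 | c3
      · -- boundary block1 -> block2 : p.val + 1 = i1
        have e1 : (p+1).val = i1 := by
          rw [hpadd, show p.val + 1 = i1 from by omega]; exact Nat.mod_eq_of_lt (by omega)
        rw [if_pos (by omega : p.val < i1), e1, if_neg (by omega), if_pos (by omega)]
        rw [show (p.val : ZMod n) = ((i1-1 : ℕ) : ZMod n) from by congr 1; omega,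
          show i1 - i1 = 0 from by omega, Nat.cast_zero, add_zero]
        exact h1
      · -- inside block2
        have e1 : (p+1).val = p.val + 1 := by rw [hpadd]; exact Nat.mod_eq_of_lt (by omega)
        rw [if_neg (by omega), if_pos (by omega), e1, if_neg (by omega), if_pos c2]
        rw [show ((p.val + 1 - i1 : ℕ) : ZMod m) = ((p.val - i1 : ℕ) : ZMod m) + 1 from by
          rw [show p.val + 1 - i1 = (p.val - i1) + 1 from by omega]; push_cast; ring,
          ← add_assoc]
        exact hycyc _
    rcases Nat.lt_or_ge (p.val + 1) o3 with c4 | c4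
    · rcases Nat.eq_or_lt_of_le c2 with c5 | c5
      · -- boundary block2 -> block3 : p.val + 1 = o2
        have e1 : (p+1).val = o2 := by
          rw [hpadd, show p.val + 1 = o2 from by omega]; exact Nat.mod_eq_of_lt (by omega)
        rw [if_neg (by omega), if_pos (by omega), e1, if_neg (by omega), if_neg (by omega),
          if_pos (by omega)]
        rw [show ((p.val - i1 : ℕ) : ZMod m) = ((j1-1 : ℕ) : ZMod m) from by congr 1; omega,
          show o2 - o2 = 0 from by omega, Nat.add_zero]
        exact h2
      · -- inside block3
        have e1 : (p+1).val = p.val + 1 := by rw [hpadd]; exact Nat.mod_eq_of_lt (by omega)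
        rw [if_neg (by omega), if_neg (by omega), if_pos (by omega), e1, if_neg (by omega),
          if_neg (by omega), if_pos c4]
        rw [show ((i1 + g1 + (p.val + 1 - o2) : ℕ) : ZMod n)
              = ((i1 + g1 + (p.val - o2) : ℕ) : ZMod n) + 1 from by
          rw [show i1 + g1 + (p.val + 1 - o2) = (i1 + g1 + (p.val - o2)) + 1 from by omega]
          push_cast; ring, ← add_assoc]
        exact hxcyc _
    rcases Nat.lt_or_ge (p.val + 1) t with c6 | c6
    · rcases Nat.eq_or_lt_of_le c4 with c7 | c7
      · -- boundary block3 -> block4 : p.val + 1 = o3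
        have e1 : (p+1).val = o3 := by
          rw [hpadd, show p.val + 1 = o3 from by omega]; exact Nat.mod_eq_of_lt (by omega)
        rw [if_neg (by omega), if_neg (by omega), if_pos (by omega), e1, if_neg (by omega),
          if_neg (by omega), if_neg (by omega)]
        rw [show i1 + g1 + (p.val - o2) = i1 + g1 + (i2 - 1) from by omega,
          show o3 - o3 = 0 from by omega, Nat.add_zero]
        exact h3
      · -- inside block4
        have e1 : (p+1).val = p.val + 1 := by rw [hpadd]; exact Nat.mod_eq_of_lt (by omega)
        rw [if_neg (by omega), if_neg (by omega), if_neg (by omega), e1, if_neg (by omega),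
          if_neg (by omega), if_neg (by omega)]
        rw [show ((j1 + d1 + (p.val + 1 - o3) : ℕ) : ZMod m)
              = ((j1 + d1 + (p.val - o3) : ℕ) : ZMod m) + 1 from by
          rw [show j1 + d1 + (p.val + 1 - o3) = (j1 + d1 + (p.val - o3)) + 1 from by omega]
          push_cast; ring, ← add_assoc]
        exact hycyc _
    · -- wrap : p.val + 1 = t
      have e1 : (p+1).val = 0 := by
        rw [hpadd, show p.val + 1 = t from by omega]; exact Nat.mod_self t
      rw [e1, if_neg (by omega), if_neg (by omega), if_neg (by omega), if_pos (by omega : 0 < i1)]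
      rw [show j1 + d1 + (p.val - o3) = j1 + d1 + (j2 - 1) from by omega,
        Nat.cast_zero, add_zero]
      exact h4
  constructor
  · refine ⟨z, hinj, harc, 0, ?_⟩
    simp only [hz]
    rw [if_pos (by rw [ZMod.val_zero]; omega : (0 : ZMod t).val < i1)]
    rw [ZMod.val_zero, Nat.cast_zero, add_zero]
  · refine ⟨z, hinj, harc, (i1 : ZMod t), ?_⟩
    have e1 : ((i1 : ZMod t)).val = i1 := by
      rw [ZMod.val_natCast]; exact Nat.mod_eq_of_lt (by omega)
    simp only [hz]
    rw [if_neg (by omega), e1, if_pos (by omega), show i1 - i1 = 0 from by omega,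
      Nat.cast_zero, add_zero]


set_option maxHeartbeats 1000000 in
/-- In a strong generalized sum of two Hamiltonian digraphs with no good pair,
every vertex lies on a cycle of each length t with min(n,m)+2 ≤ t ≤ n+m. -/
theorem stmt5 {V : Type*} (A : V → V → Prop) {n m : ℕ}
    (hn : 2 ≤ n) (hm : 2 ≤ m)
    (x : ZMod n → V) (y : ZMod m → V)
    (hxinj : Function.Injective x) (hyinj : Function.Injective y)
    (hxcyc : ∀ i, A (x i) (x (i + 1))) (hycyc : ∀ i, A (y i) (y (i + 1)))
    (hdisj : ∀ s t, x s ≠ y t)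
    (hcov : ∀ v : V, (∃ s, x s = v) ∨ (∃ t, y t = v))
    (hone : ∀ s t, Xor' (A (x s) (y t)) (A (y t) (x s)))
    (hstrong : ∀ u v : V, u ≠ v → Relation.ReflTransGen A u v)
    (hngp : ¬ ∃ (s : ZMod n) (r : ZMod m), A (x s) (y r) ∧ A (y (r - 1)) (x (s + 1))) :
    ∀ v : V, ∀ t : ℕ, min n m + 2 ≤ t → t ≤ n + m → CycleThru A t v := by
  intro v t ht1 ht2

  classical
  haveI : NeZero n := ⟨by omega⟩
  haveI : NeZero m := ⟨by omega⟩
  set g := Nat.gcd n m with hgdef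
  have hgn : g ∣ n := Nat.gcd_dvd_left n m
  have hgm : g ∣ m := Nat.gcd_dvd_right n m
  have hg0 : 0 < g := Nat.gcd_pos_of_pos_left _ (by omega)
  haveI : NeZero g := ⟨by omega⟩
  have hglen : g ≤ n := Nat.le_of_dvd (by omega) hgn
  have hglem : g ≤ m := Nat.le_of_dvd (by omega) hgm
  have castval : ∀ c : ZMod g, ((c.val : ℕ) : ZMod g) = c := fun c => ZMod.natCast_rightInverse c
  set pn : ZMod n →+* ZMod g := ZMod.castHom hgn (ZMod g) with hpn
  set pm : ZMod m →+* ZMod g := ZMod.castHom hgm (ZMod g) with hpm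
  -- CRT
  have crt : ∀ (s s' : ZMod n) (r r' : ZMod m), pn s + pm r = pn s' + pm r' →
      ∃ k : ℕ, s + (k : ZMod n) = s' ∧ r - (k : ZMod m) = r' := by
    intro s s' r r' hcl
    have hcl' : pn (s' - s) = pm (r - r') := by
      rw [map_sub, map_sub]; linear_combination -hcl
    set a : ℕ := (s' - s).val with ha
    set b : ℕ := (r - r').val with hb
    have ea : ((a : ℕ) : ZMod g) = pn (s' - s) := by
      rw [ZMod.natCast_val, hpn, ZMod.castHom_apply]
    have eb : ((b : ℕ) : ZMod g) = pm (r - r') := by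
      rw [ZMod.natCast_val, hpm, ZMod.castHom_apply]
    have hab : (((b:ℤ) - (a:ℤ) : ℤ) : ZMod g) = 0 := by
      push_cast
      rw [ea, eb, hcl']
      ring
    obtain ⟨w, hw⟩ := (ZMod.intCast_zmod_eq_zero_iff_dvd _ _).mp hab
    set K : ℤ := a + (w * Nat.gcdA n m) * n with hK
    have hK2 : K = b - (w * Nat.gcdB n m) * m := by
      have hbez := Nat.gcd_eq_gcd_ab n m
      rw [← hgdef] at hbez
      rw [hK]
      linear_combination (-w) * hbez - hw
    have hnm0 : (0:ℤ) < (n:ℤ) * m := by positivity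
    set k : ℕ := (K % ((n:ℤ) * m)).toNat with hk
    have hk0 : 0 ≤ K % ((n:ℤ)*m) := Int.emod_nonneg _ (by omega)
    have e1 : ((k : ℕ) : ℤ) = K % ((n:ℤ)*m) := Int.toNat_of_nonneg hk0
    refine ⟨k, ?_, ?_⟩
    · have e2 : (((K % ((n:ℤ)*m)) : ℤ) : ZMod n) = ((K : ℤ) : ZMod n) :=
        (ZMod.intCast_eq_intCast_iff _ _ _).mpr (Int.emod_emod_of_dvd K ⟨(m:ℤ), by ring⟩)
      have e3 : ((k : ℕ) : ZMod n) = s' - s := by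
        calc ((k : ℕ) : ZMod n) = (((k:ℕ):ℤ) : ZMod n) := by push_cast; ring
        _ = ((K : ℤ) : ZMod n) := by rw [e1, e2]
        _ = ((a:ℕ) : ZMod n) := by rw [hK]; push_cast; simp [ZMod.natCast_self]
        _ = s' - s := ZMod.natCast_rightInverse _
      rw [e3]; exact add_sub_cancel s s'
    · have e2 : (((K % ((n:ℤ)*m)) : ℤ) : ZMod m) = ((K : ℤ) : ZMod m) :=
        (ZMod.intCast_eq_intCast_iff _ _ _).mpr (Int.emod_emod_of_dvd K ⟨(n:ℤ), by ring⟩)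
      have e3 : ((k : ℕ) : ZMod m) = r - r' := by
        calc ((k : ℕ) : ZMod m) = (((k:ℕ):ℤ) : ZMod m) := by push_cast; ring
        _ = ((K : ℤ) : ZMod m) := by rw [e1, e2]
        _ = ((b:ℕ) : ZMod m) := by rw [hK2]; push_cast; simp [ZMod.natCast_self]
        _ = r - r' := ZMod.natCast_rightInverse _
      rw [e3]; exact sub_sub_cancel r r'
  -- one-step propagation
  have step : ∀ (s : ZMod n) (r : ZMod m), A (x s) (y r) → A (x (s+1)) (y (r-1)) := by
    intro s r h
    rcases hone (s+1) (r-1) with ⟨h', _⟩ | ⟨h', _⟩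
    · exact h'
    · exact absurd ⟨s, r, h, h'⟩ hngp
  have stepk : ∀ (k : ℕ) (s : ZMod n) (r : ZMod m), A (x s) (y r) →
      A (x (s + (k : ZMod n))) (y (r - (k : ZMod m))) := by
    intro k
    induction k with
    | zero => intro s r h; simpa using h
    | succ k ih =>
      intro s r h
      have h2 := step _ _ (ih s r h)
      have e1 : s + (k:ZMod n) + 1 = s + ((k+1 : ℕ) : ZMod n) := by push_cast; ring
      have e2 : r - (k:ZMod m) - 1 = r - ((k+1 : ℕ) : ZMod m) := by push_cast; ring
      rwa [e1, e2] at h2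
  have transfer : ∀ (s : ZMod n) (r : ZMod m) (s' : ZMod n) (r' : ZMod m),
      pn s + pm r = pn s' + pm r' → A (x s) (y r) → A (x s') (y r') := by
    intro s r s' r' hcl h
    obtain ⟨k, hk1, hk2⟩ := crt s s' r r' hcl
    have h2 := stepk k s r h
    rwa [hk1, hk2] at h2
  set Good : ZMod g → Prop := fun c => ∀ (s : ZMod n) (r : ZMod m), pn s + pm r = c → A (x s) (y r)
    with hGoodDef
  set Bad : ZMod g → Prop := fun c => ∀ (s : ZMod n) (r : ZMod m), pn s + pm r = c → A (y r) (x s)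
    with hBadDef
  -- representative
  have hrep : ∀ c : ZMod g, pn ((c.val : ℕ) : ZMod n) + pm 0 = c := by
    intro c
    rw [map_zero, add_zero, map_natCast]
    exact ZMod.natCast_rightInverse c
  have htot : ∀ c : ZMod g, Good c ∨ Bad c := by
    intro c
    rcases hone ((c.val : ℕ) : ZMod n) 0 with ⟨h, _⟩ | ⟨h, hneg⟩
    · left; intro s r hcl
      exact transfer _ _ s r (by rw [hrep c, hcl]) h
    · right; intro s r hcl
      rcases hone s r with ⟨h1, _⟩ | ⟨h1, _⟩
      · exact absurd (transfer s r _ _ (by rw [hrep c, hcl]) h1) hneg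
      · exact h1
  have hGB : ∀ c : ZMod g, Good c → Bad c → False := by
    intro c hG hB
    rcases hone ((c.val : ℕ) : ZMod n) 0 with ⟨_, hneg⟩ | ⟨_, hneg⟩
    · exact hneg (hB _ _ (hrep c))
    · exact hneg (hG _ _ (hrep c))
  -- strongness gives existence of Good and Bad classes
  have cross1 : ∀ u w : V, Relation.ReflTransGen A u w → (∃ s, u = x s) → (∃ r, w = y r) →
      ∃ (s' : ZMod n) (r' : ZMod m), A (x s') (y r') := by
    intro u w hrel
    induction hrel using Relation.ReflTransGen.head_induction_on with
    | refl =>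
      rintro ⟨s, hu⟩ ⟨r, hw⟩
      exact absurd (hu.symm.trans hw) (hdisj s r)
    | @head u' b' harc hrel ih =>
      rintro ⟨s, hu⟩ hex
      rcases hcov b' with ⟨s2, hb⟩ | ⟨r2, hb⟩
      · exact ih ⟨s2, hb.symm⟩ hex
      · refine ⟨s, r2, ?_⟩
        rw [hu, ← hb] at harc
        exact harc
  have cross2 : ∀ u w : V, Relation.ReflTransGen A u w → (∃ r, u = y r) → (∃ s, w = x s) →
      ∃ (s' : ZMod n) (r' : ZMod m), A (y r') (x s') := by
    intro u w hrel
    induction hrel using Relation.ReflTransGen.head_induction_on with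
    | refl =>
      rintro ⟨r, hu⟩ ⟨s, hw⟩
      exact absurd (hw.symm.trans hu) (hdisj s r)
    | @head u' b' harc hrel ih =>
      rintro ⟨r, hu⟩ hex
      rcases hcov b' with ⟨s2, hb⟩ | ⟨r2, hb⟩
      · refine ⟨s2, r, ?_⟩
        rw [hu, ← hb] at harc
        exact harc
      · exact ih ⟨r2, hb.symm⟩ hex
  obtain ⟨sG, rG, harcG⟩ := cross1 (x 0) (y 0) (hstrong _ _ (hdisj 0 0)) ⟨0, rfl⟩ ⟨0, rfl⟩
  obtain ⟨sB, rB, harcB⟩ := cross2 (y 0) (x 0) (hstrong _ _ (Ne.symm (hdisj 0 0))) ⟨0, rfl⟩ ⟨0, rfl⟩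
  have hexG : Good (pn sG + pm rG) := by
    intro s r hcl
    exact transfer _ _ s r hcl.symm harcG
  have hexB : Bad (pn sB + pm rB) := by
    intro s r hcl
    rcases hone s r with ⟨h1, _⟩ | ⟨h1, _⟩
    · rcases hone sB rB with ⟨h2, hneg⟩ | ⟨h2, hneg⟩
      · exact absurd harcB hneg
      · exact absurd (transfer s r sB rB (by rw [hcl]) h1) hneg
    · exact h1
  set c0 : ZMod g := pn sG + pm rG with hc0
  set c1 : ZMod g := pn sB + pm rB with hc1
  have hg2 : 2 ≤ g := by
    by_contra hlt
    have hgeq1 : g = 1 := by omega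
    have hsub : Subsingleton (ZMod g) := by rw [hgeq1]; infer_instance
    exact hGB c0 hexG ((Subsingleton.elim c1 c0) ▸ hexB)
  -- flips
  have hfindF : ∃ k : ℕ, ¬ Good (c0 + (k : ZMod g)) := by
    refine ⟨(c1 - c0).val, ?_⟩
    rw [castval, add_sub_cancel]
    exact fun h => hGB c1 h hexB
  have hfindB : ∃ k : ℕ, ¬ Good (c0 - (k : ZMod g)) := by
    refine ⟨(c0 - c1).val, ?_⟩
    rw [castval, sub_sub_cancel]
    exact fun h => hGB c1 h hexB
  obtain ⟨kF, hkF, hkFmin⟩ : ∃ k : ℕ, ¬ Good (c0 + (k : ZMod g)) ∧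
      ∀ j < k, Good (c0 + (j : ZMod g)) := by
    refine ⟨Nat.find hfindF, Nat.find_spec hfindF, ?_⟩
    intro j hj
    by_contra h
    exact Nat.find_min hfindF hj h
  obtain ⟨kB, hkB, hkBmin⟩ : ∃ k : ℕ, ¬ Good (c0 - (k : ZMod g)) ∧
      ∀ j < k, Good (c0 - (j : ZMod g)) := by
    refine ⟨Nat.find hfindB, Nat.find_spec hfindB, ?_⟩
    intro j hj
    by_contra h
    exact Nat.find_min hfindB hj h
  have hkF0 : 1 ≤ kF := by
    rcases Nat.eq_zero_or_pos kF with h | h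
    · exact absurd (by simpa [h] using hexG) (h ▸ hkF)
    · exact h
  have hkB0 : 1 ≤ kB := by
    rcases Nat.eq_zero_or_pos kB with h | h
    · exact absurd (by simpa [h] using hexG) (h ▸ hkB)
    · exact h
  set al : ZMod g := c0 + ((kF - 1 : ℕ) : ZMod g) with hal
  set be : ZMod g := c0 - ((kB - 1 : ℕ) : ZMod g) with hbe
  have hGal : Good al := hkFmin _ (by omega)
  have hBal : Bad (al + 1) := by
    have e : al + 1 = c0 + (kF : ZMod g) := by
      rw [hal, add_assoc]
      congr 1
      calc ((kF - 1 : ℕ) : ZMod g) + 1 = (((kF - 1) + 1 : ℕ) : ZMod g) := by push_cast; ring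
      _ = (kF : ZMod g) := by rw [show kF - 1 + 1 = kF from by omega]
    rw [e]
    exact (htot _).resolve_left hkF
  have hGbe : Good be := hkBmin _ (by omega)
  have hBbe : Bad (be - 1) := by
    have e : be - 1 = c0 - (kB : ZMod g) := by
      rw [hbe]
      have e2 : ((kB : ℕ) : ZMod g) = ((kB - 1 : ℕ) : ZMod g) + 1 := by
        calc ((kB : ℕ) : ZMod g) = (((kB - 1) + 1 : ℕ) : ZMod g) := by
              rw [show kB - 1 + 1 = kB from by omega]
        _ = ((kB - 1 : ℕ) : ZMod g) + 1 := by push_cast; ring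
      rw [e2]
      ring
    rw [e]
    exact (htot _).resolve_left hkB
  -- ============ constructors ============
  have hm0 : ((m : ℕ) : ZMod g) = 0 := (ZMod.natCast_eq_zero_iff m g).mpr hgm
  have hn0 : ((n : ℕ) : ZMod g) = 0 := (ZMod.natCast_eq_zero_iff n g).mpr hgn
  have lift_m : ∀ c : ZMod g, pm ((c.val : ℕ) : ZMod m) = c := by
    intro c; rw [map_natCast]; exact ZMod.natCast_rightInverse c
  have lift_n : ∀ c : ZMod g, pn ((c.val : ℕ) : ZMod n) = c := by
    intro c; rw [map_natCast]; exact ZMod.natCast_rightInverse c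
  have val_pos : ∀ c : ZMod g, c ≠ 0 → 1 ≤ c.val := by
    intro c hc
    rcases Nat.eq_zero_or_pos c.val with h | h
    · exfalso
      apply hc
      have h2 : ((c.val : ℕ) : ZMod g) = c := ZMod.natCast_rightInverse c
      rw [h] at h2
      simpa using h2.symm
    · exact h
  have hneg1 : (-1 : ZMod g) ≠ 0 := by
    intro h
    have h1 : ((1:ℕ) : ZMod g) = 0 := by
      have h2 := neg_eq_zero.mp h
      simpa using h2
    have h3 := (ZMod.natCast_eq_zero_iff 1 g).mp h1
    have := Nat.dvd_one.mp h3
    omega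
  have doK1 : ∀ (i j : ℕ) (φ : ZMod g), 1 ≤ i → i ≤ n → 1 ≤ j → j ≤ m → t = i + j →
      Good φ → Bad (φ + (((j:ℕ) : ZMod g) - ((i:ℕ) : ZMod g))) → CycleThru A t v := by
    intro i j φ hi1 hin hj1 hjm htij hGφ hBφ
    have fi : ((i - 1 : ℕ) : ZMod g) = ((i:ℕ) : ZMod g) - 1 := by
      rw [Nat.cast_sub hi1]; norm_num
    have fj : ((j - 1 : ℕ) : ZMod g) = ((j:ℕ) : ZMod g) - 1 := by
      rw [Nat.cast_sub hj1]; norm_num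
    rcases hcov v with ⟨w, hw⟩ | ⟨w, hw⟩
    · obtain ⟨b, hb⟩ : ∃ b : ZMod m, pm b = φ - ((i-1:ℕ) : ZMod g) - pn w := ⟨_, lift_m _⟩
      have H1 : A (x (w + ((i-1 : ℕ) : ZMod n))) (y b) := by
        apply hGφ
        simp only [map_add, map_natCast]
        first
        | (rw [hb]; ring)
        | (rw [ha]; ring)
      have H2 : A (y (b + ((j-1 : ℕ) : ZMod m))) (x w) := by
        apply hBφ
        simp only [map_add, map_natCast]
        first
        | (rw [hb, fi, fj]; ring)
        | (rw [ha, fi, fj]; ring)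
      rw [← hw]
      exact (build2 A x y hxinj hyinj hxcyc hycyc hdisj i j t hi1 hin hj1 hjm htij w b H1 H2).1
    · obtain ⟨a, ha⟩ : ∃ a : ZMod n, pn a = φ - ((i-1:ℕ) : ZMod g) - pm w := ⟨_, lift_n _⟩
      have H1 : A (x (a + ((i-1 : ℕ) : ZMod n))) (y w) := by
        apply hGφ
        simp only [map_add, map_natCast]
        first
        | (rw [hb]; ring)
        | (rw [ha]; ring)
      have H2 : A (y (w + ((j-1 : ℕ) : ZMod m))) (x a) := by
        apply hBφ
        simp only [map_add, map_natCast]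
        first
        | (rw [hb, fi, fj]; ring)
        | (rw [ha, fi, fj]; ring)
      rw [← hw]
      exact (build2 A x y hxinj hyinj hxcyc hycyc hdisj i j t hi1 hin hj1 hjm htij a w H1 H2).2
  have doK2 : ∀ (i1 j1 i2 j2 g1 d1 : ℕ) (σ : ZMod g),
      1 ≤ i1 → 1 ≤ j1 → 1 ≤ i2 → 1 ≤ j2 → i1 + g1 + i2 ≤ n → j1 + d1 + j2 ≤ m →
      t = i1 + j1 + i2 + j2 →
      Good (σ + ((i1 - 1 : ℕ) : ZMod g)) →
      Bad (σ + ((i1 + g1 + j1 - 1 : ℕ) : ZMod g)) →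
      Good (σ + ((i1 + g1 + j1 + d1 + i2 - 1 : ℕ) : ZMod g)) →
      Bad (σ + ((j1 + d1 + j2 - 1 : ℕ) : ZMod g)) → CycleThru A t v := by
    intro i1 j1 i2 j2 g1 d1 σ h1i h1j h2i h2j hxb hyb htijk hu1 hu2 hu3 hu4
    have e2n : i1 + g1 + j1 - 1 = (i1 + g1) + (j1 - 1) := by omega
    have e3n : i1 + g1 + j1 + d1 + i2 - 1 = (i1 + g1 + (i2-1)) + (j1 + d1) := by omega
    have e4n : j1 + d1 + j2 - 1 = j1 + d1 + (j2 - 1) := by omega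
    rcases hcov v with ⟨w, hw⟩ | ⟨w, hw⟩
    · obtain ⟨b, hb⟩ : ∃ b : ZMod m, pm b = σ - pn w := ⟨_, lift_m _⟩
      have H1 : A (x (w + ((i1-1 : ℕ) : ZMod n))) (y b) := by
        apply hu1
        simp only [map_add, map_natCast]
        first
        | (rw [hb]; ring)
        | (rw [ha]; ring)
      have H2 : A (y (b + ((j1-1 : ℕ) : ZMod m))) (x (w + ((i1+g1 : ℕ) : ZMod n))) := by
        apply hu2
        simp only [map_add, map_natCast]
        first
        | (rw [hb, e2n]; push_cast; ring)
        | (rw [ha, e2n]; push_cast; ring)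
      have H3 : A (x (w + ((i1+g1+(i2-1) : ℕ) : ZMod n))) (y (b + ((j1+d1 : ℕ) : ZMod m))) := by
        apply hu3
        simp only [map_add, map_natCast]
        first
        | (rw [hb, e3n]; push_cast; ring)
        | (rw [ha, e3n]; push_cast; ring)
      have H4 : A (y (b + ((j1+d1+(j2-1) : ℕ) : ZMod m))) (x w) := by
        apply hu4
        simp only [map_add, map_natCast]
        first
        | (rw [hb, e4n]; ring)
        | (rw [ha, e4n]; ring)
      rw [← hw]
      exact (build4 A x y hxinj hyinj hxcyc hycyc hdisj i1 j1 i2 j2 g1 d1 t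
        h1i h1j h2i h2j hxb hyb htijk w b H1 H2 H3 H4).1
    · obtain ⟨a, ha⟩ : ∃ a : ZMod n, pn a = σ - pm w := ⟨_, lift_n _⟩
      have H1 : A (x (a + ((i1-1 : ℕ) : ZMod n))) (y w) := by
        apply hu1
        simp only [map_add, map_natCast]
        first
        | (rw [hb]; ring)
        | (rw [ha]; ring)
      have H2 : A (y (w + ((j1-1 : ℕ) : ZMod m))) (x (a + ((i1+g1 : ℕ) : ZMod n))) := by
        apply hu2
        simp only [map_add, map_natCast]
        first
        | (rw [hb, e2n]; push_cast; ring)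
        | (rw [ha, e2n]; push_cast; ring)
      have H3 : A (x (a + ((i1+g1+(i2-1) : ℕ) : ZMod n))) (y (w + ((j1+d1 : ℕ) : ZMod m))) := by
        apply hu3
        simp only [map_add, map_natCast]
        first
        | (rw [hb, e3n]; push_cast; ring)
        | (rw [ha, e3n]; push_cast; ring)
      have H4 : A (y (w + ((j1+d1+(j2-1) : ℕ) : ZMod m))) (x a) := by
        apply hu4
        simp only [map_add, map_natCast]
        first
        | (rw [hb, e4n]; ring)
        | (rw [ha, e4n]; ring)
      rw [← hw]
      exact (build4 A x y hxinj hyinj hxcyc hycyc hdisj i1 j1 i2 j2 g1 d1 t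
        h1i h1j h2i h2j hxb hyb htijk a w H1 H2 H3 H4).2
  -- ============ patterns ============
  have patC : ∀ I J : ℕ, 2 ≤ I → I ≤ n → 2 ≤ J → J ≤ m → t = I + J →
      ((J:ℕ) : ZMod g) = ((I:ℕ) : ZMod g) → g ≤ I + (m - J) → CycleThru A t v := by
    intro I J hI2 hIn hJ2 hJm htIJ hJI hside
    have hc2ne : be - al - 1 ≠ 0 := by
      intro h
      have hbe_eq : be = al + 1 := by linear_combination h
      exact hGB _ (hbe_eq ▸ hGbe) hBal
    have hR1 : 1 ≤ (be - al - 1).val := val_pos _ hc2ne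
    have hRg : (be - al - 1).val < g := ZMod.val_lt _
    have hRcast : (((be - al - 1).val : ℕ) : ZMod g) = be - al - 1 := ZMod.natCast_rightInverse _
    set R : ℕ := (be - al - 1).val with hRdef
    set i2 : ℕ := min R (I - 1) with hi2def
    set d1 : ℕ := R - i2 with hd1def
    set i1 : ℕ := I - i2 with hi1def
    have hf1 : 1 ≤ i2 := by omega
    have hf2 : i2 + d1 = R := by omega
    have hf3 : d1 ≤ m - J := by omega
    have hf4 : 1 ≤ i1 := by omega
    have hf5 : i1 + i2 = I := by omega
    have ci2d1 : ((i2:ℕ) : ZMod g) + ((d1:ℕ) : ZMod g) = be - al - 1 := by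
      rw [← Nat.cast_add, hf2, hRcast]
    have cI : ((i1:ℕ) : ZMod g) + ((i2:ℕ) : ZMod g) = ((I:ℕ) : ZMod g) := by
      rw [← Nat.cast_add, hf5]
    refine doK2 i1 1 i2 (J-1) 0 d1 (al - ((i1 - 1 : ℕ) : ZMod g)) hf4 le_rfl hf1
      (by omega) (by omega) (by omega) (by omega) ?_ ?_ ?_ ?_
    · rw [sub_add_cancel]
      exact hGal
    · rw [show i1 + 0 + 1 - 1 = (i1 - 1) + 1 from by omega, Nat.cast_add, Nat.cast_one,
        show al - ((i1-1:ℕ) : ZMod g) + (((i1-1 : ℕ) : ZMod g) + 1) = al + 1 from by ring]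
      exact hBal
    · rw [show i1 + 0 + 1 + d1 + i2 - 1 = (i1 - 1) + 1 + d1 + i2 from by omega]
      rw [show al - ((i1-1:ℕ) : ZMod g) + (((i1-1) + 1 + d1 + i2 : ℕ) : ZMod g) = be from by
        push_cast
        linear_combination ci2d1]
      exact hGbe
    · rw [show 1 + d1 + (J-1) - 1 = d1 + (J - 1) from by omega]
      rw [show al - ((i1-1:ℕ) : ZMod g) + ((d1 + (J-1) : ℕ) : ZMod g) = be - 1 from by
        rw [Nat.cast_add, Nat.cast_sub (by omega : 1 ≤ J), Nat.cast_sub hf4]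
        linear_combination ci2d1 - cI + hJI]
      exact hBbe
  have patA : ∀ I J : ℕ, 2 ≤ I → I ≤ n → 2 ≤ J → J ≤ m → t = I + J →
      ((J:ℕ) : ZMod g) = ((I:ℕ) : ZMod g) + 2 → g ≤ I + (m - J) → CycleThru A t v := by
    intro I J hI2 hIn hJ2 hJm htIJ hJI hside
    have hR1 : 1 ≤ (-1 : ZMod g).val := val_pos _ hneg1
    have hRg : (-1 : ZMod g).val < g := ZMod.val_lt _
    have hRcast : (((-1 : ZMod g).val : ℕ) : ZMod g) = -1 := ZMod.natCast_rightInverse _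
    set R : ℕ := (-1 : ZMod g).val with hRdef
    set i2 : ℕ := min R (I - 1) with hi2def
    set d1 : ℕ := R - i2 with hd1def
    set i1 : ℕ := I - i2 with hi1def
    have hf1 : 1 ≤ i2 := by omega
    have hf2 : i2 + d1 = R := by omega
    have hf3 : d1 ≤ m - J := by omega
    have hf4 : 1 ≤ i1 := by omega
    have hf5 : i1 + i2 = I := by omega
    have ci2d1 : ((i2:ℕ) : ZMod g) + ((d1:ℕ) : ZMod g) = -1 := by
      rw [← Nat.cast_add, hf2, hRcast]
    have cI : ((i1:ℕ) : ZMod g) + ((i2:ℕ) : ZMod g) = ((I:ℕ) : ZMod g) := by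
      rw [← Nat.cast_add, hf5]
    refine doK2 i1 1 i2 (J-1) 0 d1 (al - ((i1 - 1 : ℕ) : ZMod g)) hf4 le_rfl hf1
      (by omega) (by omega) (by omega) (by omega) ?_ ?_ ?_ ?_
    · rw [sub_add_cancel]
      exact hGal
    · rw [show i1 + 0 + 1 - 1 = (i1 - 1) + 1 from by omega, Nat.cast_add, Nat.cast_one,
        show al - ((i1-1:ℕ) : ZMod g) + (((i1-1 : ℕ) : ZMod g) + 1) = al + 1 from by ring]
      exact hBal
    · rw [show i1 + 0 + 1 + d1 + i2 - 1 = (i1 - 1) + 1 + d1 + i2 from by omega]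
      rw [show al - ((i1-1:ℕ) : ZMod g) + (((i1-1) + 1 + d1 + i2 : ℕ) : ZMod g) = al from by
        push_cast
        linear_combination ci2d1]
      exact hGal
    · rw [show 1 + d1 + (J-1) - 1 = d1 + (J - 1) from by omega]
      rw [show al - ((i1-1:ℕ) : ZMod g) + ((d1 + (J-1) : ℕ) : ZMod g) = al + 1 from by
        rw [Nat.cast_add, Nat.cast_sub (by omega : 1 ≤ J), Nat.cast_sub hf4]
        linear_combination ci2d1 - cI + hJI]
      exact hBal
  have patB : ∀ I J : ℕ, 2 ≤ I → I ≤ n → 2 ≤ J → J ≤ m → t = I + J →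
      ((J:ℕ) : ZMod g) = ((I:ℕ) : ZMod g) - 2 → g ≤ J + (n - I) → CycleThru A t v := by
    intro I J hI2 hIn hJ2 hJm htIJ hJI hside
    have hR1 : 1 ≤ (-1 : ZMod g).val := val_pos _ hneg1
    have hRg : (-1 : ZMod g).val < g := ZMod.val_lt _
    have hRcast : (((-1 : ZMod g).val : ℕ) : ZMod g) = -1 := ZMod.natCast_rightInverse _
    set R : ℕ := (-1 : ZMod g).val with hRdef
    set j1 : ℕ := min R (J - 1) with hj1def
    set g1 : ℕ := R - j1 with hg1def
    set j2 : ℕ := J - j1 with hj2def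
    set i1 : ℕ := I - 1 with hi1def
    have hf1 : 1 ≤ j1 := by omega
    have hf2 : j1 + g1 = R := by omega
    have hf3 : g1 ≤ n - I := by omega
    have hf4 : 1 ≤ j2 := by omega
    have hf5 : j1 + j2 = J := by omega
    have hf6 : 1 ≤ i1 := by omega
    have cj1g1 : ((j1:ℕ) : ZMod g) + ((g1:ℕ) : ZMod g) = -1 := by
      rw [← Nat.cast_add, hf2, hRcast]
    have cJ : ((j1:ℕ) : ZMod g) + ((j2:ℕ) : ZMod g) = ((J:ℕ) : ZMod g) := by
      rw [← Nat.cast_add, hf5]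
    have cI : ((i1:ℕ) : ZMod g) + 1 = ((I:ℕ) : ZMod g) := by
      calc ((i1:ℕ) : ZMod g) + 1 = ((i1 + 1 : ℕ) : ZMod g) := by push_cast; ring
      _ = ((I:ℕ) : ZMod g) := by rw [show i1 + 1 = I from by omega]
    refine doK2 i1 j1 1 j2 g1 0 (be - ((i1 - 1 : ℕ) : ZMod g)) hf6 hf1 le_rfl hf4
      (by omega) (by omega) (by omega) ?_ ?_ ?_ ?_
    · rw [sub_add_cancel]
      exact hGbe
    · rw [show i1 + g1 + j1 - 1 = (i1 - 1) + g1 + j1 from by omega]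
      rw [show be - ((i1-1:ℕ) : ZMod g) + (((i1-1) + g1 + j1 : ℕ) : ZMod g) = be - 1 from by
        push_cast
        linear_combination cj1g1]
      exact hBbe
    · rw [show i1 + g1 + j1 + 0 + 1 - 1 = (i1 - 1) + 1 + g1 + j1 from by omega]
      rw [show be - ((i1-1:ℕ) : ZMod g) + (((i1-1) + 1 + g1 + j1 : ℕ) : ZMod g) = be from by
        push_cast
        linear_combination cj1g1]
      exact hGbe
    · rw [show j1 + 0 + j2 - 1 = J - 1 from by omega]
      rw [show be - ((i1-1:ℕ) : ZMod g) + ((J - 1 : ℕ) : ZMod g) = be - 1 from by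
        rw [Nat.cast_sub (by omega : 1 ≤ J), Nat.cast_sub hf6]
        linear_combination hJI - cI]
      exact hBbe
  -- ============ assembly ============
  have hparn : g % 2 = 0 → n % 2 = 0 := by
    intro h
    have h2 : 2 ∣ n := dvd_trans (Nat.dvd_of_mod_eq_zero h) hgn
    omega
  have hparm : g % 2 = 0 → m % 2 = 0 := by
    intro h
    have h2 : 2 ∣ m := dvd_trans (Nat.dvd_of_mod_eq_zero h) hgm
    omega
  rcases Nat.even_or_odd (n + m - t) with hpar | hpar
  · -- EVEN case
    have he : (n + m - t) % 2 = 0 := Nat.even_iff.mp hpar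
    obtain ⟨q, hq⟩ : ∃ q, n + m - t = 2*q := ⟨(n+m-t)/2, by omega⟩
    by_cases hE1 : q ≤ n - 2 ∧ q ≤ m - 2
    · refine patC (n - q) (m - q) (by omega) (by omega) (by omega) (by omega) (by omega) ?_ (by omega)
      rw [Nat.cast_sub (by omega : q ≤ m), Nat.cast_sub (by omega : q ≤ n), hm0, hn0]
    · by_cases hnm : n ≤ m
      · -- E2 : t ≤ m
        have hq2 : n - 1 ≤ q := by omega
        have htm : t ≤ m := by omega
        obtain ⟨J, hJlo, hJhi, hJdvd⟩ := window2 g (t - n) (t - 2) (t:ℤ) hg2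
          (by intro h; have := hparn h; have := hparm h; omega) (by omega)
        have hJt : J ≤ t := by omega
        rcases hJdvd with hdvd | ⟨hJeq, hdvd⟩
        · have h0 : (((2*(J:ℤ) - (t:ℤ)) : ℤ) : ZMod g) = 0 :=
            (ZMod.intCast_zmod_eq_zero_iff_dvd _ _).mpr hdvd
          push_cast at h0
          refine patC (t - J) J (by omega) (by omega) (by omega) (by omega) (by omega) ?_ (by omega)
          rw [Nat.cast_sub hJt]
          linear_combination h0
        · have h0 : (((2*(J:ℤ) - ((t:ℤ)+2)) : ℤ) : ZMod g) = 0 :=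
            (ZMod.intCast_zmod_eq_zero_iff_dvd _ _).mpr hdvd
          push_cast at h0
          refine patA (t - J) J (by omega) (by omega) (by omega) (by omega) (by omega) ?_ (by omega)
          rw [Nat.cast_sub hJt]
          linear_combination h0
      · -- E3 : m < n, t ≤ n
        have hq2 : m - 1 ≤ q := by omega
        have htn : t ≤ n - m + 2 := by omega
        obtain ⟨J, hJlo, hJhi, hJdvd⟩ := window2 g 2 m ((t:ℤ) - 2) hg2
          (by intro h; have := hparn h; have := hparm h; omega) (by omega)
        have hJt : J ≤ t := by omega
        rcases hJdvd with hdvd | ⟨hJeq, hdvd⟩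
        · have h0 : (((2*(J:ℤ) - ((t:ℤ)-2)) : ℤ) : ZMod g) = 0 :=
            (ZMod.intCast_zmod_eq_zero_iff_dvd _ _).mpr hdvd
          push_cast at h0
          refine patB (t - J) J (by omega) (by omega) (by omega) (by omega) (by omega) ?_ (by omega)
          rw [Nat.cast_sub hJt]
          linear_combination h0
        · have h0 : (((2*(J:ℤ) - ((t:ℤ)-2+2)) : ℤ) : ZMod g) = 0 :=
            (ZMod.intCast_zmod_eq_zero_iff_dvd _ _).mpr hdvd
          push_cast at h0
          refine patC (t - J) J (by omega) (by omega) (by omega) (by omega) (by omega) ?_ (by omega)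
          rw [Nat.cast_sub hJt]
          linear_combination h0
  · -- ODD case
    have he : (n + m - t) % 2 = 1 := Nat.odd_iff.mp hpar
    obtain ⟨q, hq, hq1⟩ : ∃ q, n + m - t = 2*q - 1 ∧ 1 ≤ q := ⟨(n+m-t+1)/2, by omega, by omega⟩
    by_cases hc1 : q ≤ n - 1 ∧ q ≤ m
    · have hcls : (((m - q + 1 : ℕ)) : ZMod g) - (((n - q : ℕ)) : ZMod g) = 1 := by
        rw [show ((m - q + 1 : ℕ) : ZMod g) = ((m - q : ℕ) : ZMod g) + 1 from by push_cast; ring,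
          Nat.cast_sub (by omega : q ≤ m), Nat.cast_sub (by omega : q ≤ n), hm0, hn0]
        ring
      refine doK1 (n - q) (m - q + 1) al (by omega) (by omega) (by omega) (by omega) (by omega)
        hGal ?_
      rw [hcls]
      exact hBal
    · by_cases hc2 : q ≤ n ∧ q ≤ m - 1
      · have hcls : (((m - q : ℕ)) : ZMod g) - (((n - q + 1 : ℕ)) : ZMod g) = -1 := by
          rw [show ((n - q + 1 : ℕ) : ZMod g) = ((n - q : ℕ) : ZMod g) + 1 from by push_cast; ring,
            Nat.cast_sub (by omega : q ≤ m), Nat.cast_sub (by omega : q ≤ n), hm0, hn0]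
          ring
        refine doK1 (n - q + 1) (m - q) be (by omega) (by omega) (by omega) (by omega) (by omega)
          hGbe ?_
        rw [hcls, show be + (-1 : ZMod g) = be - 1 from by ring]
        exact hBbe
      · -- O3 : window
        obtain ⟨i, hilo, hihi, hdvd⟩ := window1 g (max 1 (t - m)) (min n (t - 1)) ((t:ℤ) - 1) hg0
          (by
            rcases Nat.even_or_odd g with hge | hgo
            · right
              have hg2' := Nat.even_iff.mp hge
              have := hparn hg2'
              have := hparm hg2'
              exact ⟨hg2', by omega, by omega⟩
            · left
              exact ⟨Nat.odd_iff.mp hgo, by omega⟩)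
        have hit : i ≤ t := by omega
        have hcls : (((t - i : ℕ)) : ZMod g) - ((i:ℕ) : ZMod g) = 1 := by
          have h0 : (((2*(i:ℤ) - ((t:ℤ)-1)) : ℤ) : ZMod g) = 0 :=
            (ZMod.intCast_zmod_eq_zero_iff_dvd _ _).mpr hdvd
          push_cast at h0
          rw [Nat.cast_sub hit]
          linear_combination -h0
        refine doK1 i (t - i) al (by omega) (by omega) (by omega) (by omega) (by omega) hGal ?_
        rw [hcls]
        exact hBal
end

section
/- Let D be a generalized sum of two vertex-disjoint digraphs D₁, D₂ with Hamiltonian cycles C₁ = (x₀,…,x_{n−1},x₀) and C₂ = (y₀,…,y_{m−1},y₀), and suppose D has no good pair of arcs between C₁ and C₂. If (x₀, y₀) and (y₁, x₀) are arcs of D (so that (x₀, y₀, y₁, x₀) is a 3-cycle), then for every t ∈ [0, n−1] the arc y_{−t} → x_{t+1} is an arc of D (subscripts mod m and n). -/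
/-- In a generalized sum of two Hamiltonian digraphs with no good pair,
if (x₀, y₀, y₁, x₀) is a 3-cycle, then y_{−t} → x_{t+1} is an arc for all t ∈ [0, n−1]. -/
theorem stmt11 {V : Type*} (A : V → V → Prop) {n m : ℕ}
    (hn : 2 ≤ n) (hm : 2 ≤ m)
    (x : ZMod n → V) (y : ZMod m → V)
    (hxinj : Function.Injective x) (hyinj : Function.Injective y)
    (hxcyc : ∀ i, A (x i) (x (i + 1))) (hycyc : ∀ i, A (y i) (y (i + 1)))
    (hdisj : ∀ s t, x s ≠ y t)
    (hcov : ∀ v : V, (∃ s, x s = v) ∨ (∃ t, y t = v))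
    (hone : ∀ s t, Xor' (A (x s) (y t)) (A (y t) (x s)))
    (hngp : ¬ ∃ (s : ZMod n) (r : ZMod m), A (x s) (y r) ∧ A (y (r - 1)) (x (s + 1)))
    (h1 : A (x 0) (y 0)) (h2 : A (y 1) (x 0)) :
    ∀ t : ℕ, t ≤ n - 1 → A (y (-(t : ZMod m))) (x ((t : ZMod n) + 1)) := by
  have key : ∀ k : ℕ, A (y (1 + (k : ZMod m))) (x (-(k : ZMod n))) := by
    intro k
    induction k with
    | zero => simpa using h2
    | succ k ih =>
      by_contra hA
      have hx : A (x (-(k : ZMod n) - 1)) (y (1 + (k : ZMod m) + 1)) := by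
        rcases hone (-(k : ZMod n) - 1) (1 + (k : ZMod m) + 1) with ⟨h, _⟩ | ⟨h, _⟩
        · exact h
        · exfalso
          apply hA
          have e1 : (1 : ZMod m) + ((k : ℕ) + 1 : ℕ) = 1 + (k : ZMod m) + 1 := by
            push_cast; ring
          have e2 : -(((k : ℕ) + 1 : ℕ) : ZMod n) = -(k : ZMod n) - 1 := by
            push_cast; ring
          rw [e1, e2]
          exact h
      apply hngp
      refine ⟨-(k : ZMod n) - 1, 1 + (k : ZMod m) + 1, hx, ?_⟩
      have e1 : (1 : ZMod m) + (k : ZMod m) + 1 - 1 = 1 + (k : ZMod m) := by ring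
      have e2 : -(k : ZMod n) - 1 + 1 = -(k : ZMod n) := by ring
      rw [e1, e2]
      exact ih
  intro t ht
  have htn : t + 1 ≤ n * m := by
    have : t + 1 ≤ n := by omega
    calc t + 1 ≤ n := this
      _ ≤ n * m := Nat.le_mul_of_pos_right n (by omega)
  set k : ℕ := n * m - (t + 1) with hkdef
  have hk : k + (t + 1) = n * m := Nat.sub_add_cancel htn
  have hm0 : ((n * m : ℕ) : ZMod m) = 0 := by
    simp [Nat.cast_mul]
  have hn0 : ((n * m : ℕ) : ZMod n) = 0 := by
    simp [Nat.cast_mul]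
  have hkm : (k : ZMod m) = -(t : ZMod m) - 1 := by
    have : ((k + (t + 1) : ℕ) : ZMod m) = 0 := by rw [hk]; exact hm0
    push_cast at this
    linear_combination this
  have hkn : (k : ZMod n) = -(t : ZMod n) - 1 := by
    have : ((k + (t + 1) : ℕ) : ZMod n) = 0 := by rw [hk]; exact hn0
    push_cast at this
    linear_combination this
  have := key k
  rw [hkm, hkn] at this
  have e1 : (1 : ZMod m) + (-(t : ZMod m) - 1) = -(t : ZMod m) := by ring
  have e2 : -(-(t : ZMod n) - 1) = (t : ZMod n) + 1 := by ring
  rw [e1, e2] at this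
  exact this
end

section
/- Let D be a generalized sum of two vertex-disjoint digraphs D₁, D₂ with Hamiltonian cycles C₁ = (x₀,…,x_{n−1},x₀) and C₂ = (y₀,…,y_{m−1},y₀), with no good pair of arcs between C₁ and C₂. If (x₀, y₀) and (y₁, x₀) are arcs of D, then for every t ∈ [0, n−1] the closed walk ε^t = (y_{−(t−1)}, x_t, y_{−t}, x_{t+1}, y_{−(t+1)}, …, x_{t+m−1}, y_{−(t+m−1)}) alternating between the two summands is a directed cycle of length 2m in D passing through x_t (subscripts mod n and m). -/
/-- In a generalized sum of two Hamiltonian digraphs with no good pair,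
if (x₀, y₀, y₁, x₀) is a 3-cycle, then for each t ∈ [0, n−1] the alternating closed walk
ε^t = (y_{−(t−1)}, x_t, y_{−t}, x_{t+1}, …, x_{t+m−1}, y_{−(t+m−1)}) is a directed cycle of
length 2m through x_t.  (As in the source, C₁ is the longer cycle: m ≤ n.) -/
theorem stmt12 {V : Type*} (A : V → V → Prop) {n m : ℕ}
    (hn : 2 ≤ n) (hm : 2 ≤ m) (hmn : m ≤ n)
    (x : ZMod n → V) (y : ZMod m → V)
    (hxinj : Function.Injective x) (hyinj : Function.Injective y)
    (hxcyc : ∀ i, A (x i) (x (i + 1))) (hycyc : ∀ i, A (y i) (y (i + 1)))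
    (hdisj : ∀ s t, x s ≠ y t)
    (hcov : ∀ v : V, (∃ s, x s = v) ∨ (∃ t, y t = v))
    (hone : ∀ s t, Xor' (A (x s) (y t)) (A (y t) (x s)))
    (hngp : ¬ ∃ (s : ZMod n) (r : ZMod m), A (x s) (y r) ∧ A (y (r - 1)) (x (s + 1)))
    (h1 : A (x 0) (y 0)) (h2 : A (y 1) (x 0)) :
    ∀ t : ℕ, t ≤ n - 1 →
      ∀ z : ZMod (2 * m) → V,
        (z = fun i => if i.val % 2 = 0
            then y (-(((t : ZMod m)) - 1) - ((i.val / 2 : ℕ) : ZMod m))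
            else x ((t : ZMod n) + ((i.val / 2 : ℕ) : ZMod n))) →
        Function.Injective z ∧ (∀ i, A (z i) (z (i + 1))) ∧ ∃ i, z i = x (t : ZMod n) := by
  haveI : NeZero n := ⟨by omega⟩
  haveI : NeZero m := ⟨by omega⟩
  haveI : NeZero (2 * m) := ⟨by omega⟩
  haveI : Fact (1 < 2 * m) := ⟨by omega⟩
  -- forward step
  have step1 : ∀ (s : ZMod n) (r : ZMod m), A (x s) (y r) → A (x (s + 1)) (y (r - 1)) := by
    intro s r h
    rcases hone (s + 1) (r - 1) with ⟨h', _⟩ | ⟨h', hc⟩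
    · exact h'
    · exact absurd ⟨s, r, h, h'⟩ hngp
  have step2 : ∀ (s : ZMod n) (r : ZMod m), A (y (r - 1)) (x (s + 1)) → A (y r) (x s) := by
    intro s r h
    rcases hone s r with ⟨h', _⟩ | ⟨h', _⟩
    · exact absurd ⟨s, r, h', h⟩ hngp
    · exact h'
  have fwd : ∀ u : ℕ, A (x (u : ZMod n)) (y (-(u : ZMod m))) := by
    intro u
    induction u with
    | zero => simpa using h1
    | succ u ih =>
        have := step1 _ _ ih
        have e1 : ((u : ZMod n)) + 1 = ((u + 1 : ℕ) : ZMod n) := by push_cast; ring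
        have e2 : -((u : ZMod m)) - 1 = -(((u + 1 : ℕ)) : ZMod m) := by push_cast; ring
        rwa [e1, e2] at this
  have bwd : ∀ k : ℕ, A (y (1 + (k : ZMod m))) (x (-(k : ZMod n))) := by
    intro k
    induction k with
    | zero => simpa using h2
    | succ k ih =>
        have h' : A (y ((2 + (k : ZMod m)) - 1)) (x ((-(k : ZMod n) - 1) + 1)) := by
          have e1 : (2 + (k : ZMod m)) - 1 = 1 + (k : ZMod m) := by ring
          have e2 : (-(k : ZMod n) - 1) + 1 = -(k : ZMod n) := by ring
          rwa [e1, e2]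
        have := step2 _ _ h'
        have e1 : (2 : ZMod m) + (k : ZMod m) = 1 + ((k + 1 : ℕ) : ZMod m) := by push_cast; ring
        have e2 : -((k : ZMod n)) - 1 = -(((k + 1 : ℕ)) : ZMod n) := by push_cast; ring
        rwa [e1, e2] at this
  have bwd' : ∀ u : ℕ, A (y (1 - (u : ZMod m))) (x (u : ZMod n)) := by
    intro u
    set k := u * (n * m - 1) with hk
    have hkey : (k + u : ℕ) = u * (n * m) := by
      have hq : 0 < n * m := Nat.mul_pos (by omega) (by omega)
      rw [hk, ← Nat.mul_succ]
      congr 1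
      omega
    have c1 : (k : ZMod n) = -(u : ZMod n) := by
      have := congrArg (Nat.cast : ℕ → ZMod n) hkey
      push_cast at this
      rw [ZMod.natCast_self] at this
      simp at this
      linear_combination this
    have c2 : (k : ZMod m) = -(u : ZMod m) := by
      have := congrArg (Nat.cast : ℕ → ZMod m) hkey
      push_cast at this
      rw [ZMod.natCast_self] at this
      simp at this
      linear_combination this
    have := bwd k
    rw [c1, c2] at this
    simpa [sub_eq_add_neg] using this
  intro t ht z hz
  subst hz
  have valcastm : ∀ a b : ℕ, a < m → b < m → ((a : ZMod m) = (b : ZMod m)) → a = b := by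
    intro a b ha hb h
    have := congrArg ZMod.val h
    rwa [ZMod.val_cast_of_lt ha, ZMod.val_cast_of_lt hb] at this
  have valcastn : ∀ a b : ℕ, a < n → b < n → ((a : ZMod n) = (b : ZMod n)) → a = b := by
    intro a b ha hb h
    have := congrArg ZMod.val h
    rwa [ZMod.val_cast_of_lt ha, ZMod.val_cast_of_lt hb] at this
  refine ⟨?_, ?_, ?_⟩
  · -- injectivity
    intro i j hij
    have hi : i.val < 2 * m := ZMod.val_lt i
    have hj : j.val < 2 * m := ZMod.val_lt j
    have goalval : i.val = j.val → i = j := by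
      intro h
      exact ZMod.val_injective _ h
    by_cases h : i.val % 2 = 0 <;> by_cases h' : j.val % 2 = 0 <;>
      simp only [h, h', if_true, if_false, if_pos, if_neg] at hij
    · apply goalval
      have := hyinj hij
      have e : ((i.val / 2 : ℕ) : ZMod m) = ((j.val / 2 : ℕ) : ZMod m) := by
        linear_combination -this
      have := valcastm _ _ (by omega) (by omega) e
      omega
    · exact absurd hij (hdisj _ _).symm
    · exact absurd hij (hdisj _ _)
    · apply goalval
      have := hxinj hij
      have e : ((i.val / 2 : ℕ) : ZMod n) = ((j.val / 2 : ℕ) : ZMod n) := by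
        linear_combination this
      have := valcastn _ _ (by omega) (by omega) e
      omega
  · -- arcs
    intro i
    dsimp only
    have hi : i.val < 2 * m := ZMod.val_lt i
    have hsucc : (i + 1).val = (i.val + 1) % (2 * m) := by
      rw [ZMod.val_add, ZMod.val_one]
    by_cases h : i.val % 2 = 0
    · -- even: y → x
      have hv : (i + 1).val = i.val + 1 := by
        rw [hsucc]; exact Nat.mod_eq_of_lt (by omega)
      rw [if_pos h, if_neg (show ¬(i + 1).val % 2 = 0 by omega), hv,
        show (i.val + 1) / 2 = i.val / 2 from by omega]
      have key := bwd' (t + i.val / 2)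
      push_cast at key
      have e1 : (1 : ZMod m) - ((t : ZMod m) + (i.val / 2 : ℕ)) =
          -((t : ZMod m) - 1) - ((i.val / 2 : ℕ) : ZMod m) := by ring
      rwa [e1] at key
    · -- odd: x → y
      have h1' : i.val % 2 = 1 := by omega
      by_cases hend : i.val + 1 < 2 * m
      · have hv : (i + 1).val = i.val + 1 := by
          rw [hsucc]; exact Nat.mod_eq_of_lt (by omega)
        rw [if_neg h, if_pos (show (i + 1).val % 2 = 0 by omega), hv,
          show (i.val + 1) / 2 = i.val / 2 + 1 from by omega]
        have key := fwd (t + i.val / 2)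
        push_cast at key
        have e1 : -((t : ZMod m) + ((i.val / 2 : ℕ) : ZMod m)) =
            -((t : ZMod m) - 1) - (((i.val / 2 + 1 : ℕ)) : ZMod m) := by push_cast; ring
        rwa [e1] at key
      · -- wrap around: i.val = 2m - 1
        have hv : (i + 1).val = 0 := by
          rw [hsucc, show i.val + 1 = 2 * m from by omega]
          exact Nat.mod_self _
        rw [if_neg h, if_pos (show (i + 1).val % 2 = 0 by omega), hv,
          show i.val / 2 = m - 1 from by omega]
        simp only [Nat.zero_div, Nat.cast_zero, sub_zero]
        have key := fwd (t + (m - 1))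
        have hm1 : ((m - 1 : ℕ) : ZMod m) = -1 := by
          have hh : ((m - 1 + 1 : ℕ) : ZMod m) = 0 := by
            rw [show m - 1 + 1 = m from by omega, ZMod.natCast_self]
          push_cast at hh
          linear_combination hh
        have e1 : -(((t + (m - 1) : ℕ)) : ZMod m) = -((t : ZMod m) - 1) := by
          push_cast [hm1]; ring
        have e2 : (((t + (m - 1) : ℕ)) : ZMod n) = (t : ZMod n) + (((m - 1 : ℕ)) : ZMod n) := by
          push_cast; ring
        rwa [e1, e2] at key
  · -- passes through x t
    refine ⟨1, ?_⟩
    have hv : (1 : ZMod (2 * m)).val = 1 := ZMod.val_one _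
    simp [hv]
end

section
/- Let D be a generalized sum of two vertex-disjoint digraphs D₁, D₂ with Hamiltonian cycles C₁ of length n and C₂ of length m, having no good pair of arcs between C₁ and C₂. Then the set of exterior arcs of D is partitioned into parallel classes, each of size lcm(n, m): explicitly, for exterior arcs the relation 'lying in a common parallel class P_{u→v}' is an equivalence relation, each class P_{x_s→y_t} = {x_{s+i} → y_{t−i} : 0 ≤ i ≤ lcm(n,m)−1} (and analogously for arcs from D₂ to D₁) has exactly lcm(n,m) elements, and each class is entirely contained in (D₁, D₂) or entirely in (D₂, D₁). -/
/-- The parallel class of an exterior arc x_s → y_t. -/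
def PXY {V : Type*} {n m : ℕ} (x : ZMod n → V) (y : ZMod m → V)
    (s : ZMod n) (t : ZMod m) : Set (V × V) :=
  {p | ∃ i : ℕ, i < Nat.lcm n m ∧ p = (x (s + (i : ZMod n)), y (t - (i : ZMod m)))}

/-- The parallel class of an exterior arc y_t → x_s. -/
def PYX {V : Type*} {n m : ℕ} (x : ZMod n → V) (y : ZMod m → V)
    (t : ZMod m) (s : ZMod n) : Set (V × V) :=
  {p | ∃ i : ℕ, i < Nat.lcm n m ∧ p = (y (t + (i : ZMod m)), x (s - (i : ZMod n)))}

section aux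
variable {V : Type*} {n m : ℕ} (x : ZMod n → V) (y : ZMod m → V)

lemma cast_helper {n L : ℕ} (hL : 0 < L) (hd : n ∣ L) (i k : ℕ) :
    ((i + (L - k % L) : ℕ) : ZMod n) = (i : ZMod n) - (k : ZMod n) := by
  have h1 : k % L ≤ L := (Nat.mod_lt k hL).le
  have h2 : ((L : ℕ) : ZMod n) = 0 := by
    obtain ⟨c, rfl⟩ := hd
    push_cast [ZMod.natCast_self]
    ring
  have h3 : ((k % L : ℕ) : ZMod n) = (k : ZMod n) := by
    rw [ZMod.natCast_eq_natCast_iff]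
    exact (Nat.mod_modEq k L).of_dvd hd
  rw [Nat.cast_add, Nat.cast_sub h1, h2, h3]
  ring

lemma mem_PXY_iff (hL : 0 < Nat.lcm n m) {s : ZMod n} {t : ZMod m} {p : V × V} :
    p ∈ PXY x y s t ↔ ∃ i : ℕ, p = (x (s + (i : ZMod n)), y (t - (i : ZMod m))) := by
  constructor
  · rintro ⟨i, -, rfl⟩; exact ⟨i, rfl⟩
  · rintro ⟨i, rfl⟩
    refine ⟨i % Nat.lcm n m, Nat.mod_lt _ hL, ?_⟩
    have h1 : ((i % Nat.lcm n m : ℕ) : ZMod n) = (i : ZMod n) := by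
      rw [ZMod.natCast_eq_natCast_iff]
      exact (Nat.mod_modEq i _).of_dvd (Nat.dvd_lcm_left n m)
    have h2 : ((i % Nat.lcm n m : ℕ) : ZMod m) = (i : ZMod m) := by
      rw [ZMod.natCast_eq_natCast_iff]
      exact (Nat.mod_modEq i _).of_dvd (Nat.dvd_lcm_right n m)
    rw [h1, h2]

lemma PXY_shift (hL : 0 < Nat.lcm n m) (s : ZMod n) (t : ZMod m) (k : ℕ) :
    PXY x y (s + (k : ZMod n)) (t - (k : ZMod m)) = PXY x y s t := by
  ext p
  rw [mem_PXY_iff x y hL, mem_PXY_iff x y hL]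
  constructor
  · rintro ⟨j, rfl⟩
    exact ⟨k + j, by
      simp only [Prod.mk.injEq]
      exact ⟨congrArg x (by push_cast; ring), congrArg y (by push_cast; ring)⟩⟩
  · rintro ⟨i, rfl⟩
    refine ⟨i + (Nat.lcm n m - k % Nat.lcm n m), ?_⟩
    have h1 := cast_helper (n := n) hL (Nat.dvd_lcm_left n m) i k
    have h2 := cast_helper (n := m) hL (Nat.dvd_lcm_right n m) i k
    simp only [Prod.mk.injEq]
    exact ⟨congrArg x (by rw [h1]; ring), congrArg y (by rw [h2]; ring)⟩

lemma PXY_eq_of_mem (hL : 0 < Nat.lcm n m)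
    (hx : Function.Injective x) (hy : Function.Injective y)
    {s s' : ZMod n} {t t' : ZMod m} {p : V × V}
    (h : p ∈ PXY x y s t) (h' : p ∈ PXY x y s' t') :
    PXY x y s t = PXY x y s' t' := by
  obtain ⟨i, -, rfl⟩ := h
  obtain ⟨j, -, hp⟩ := h'
  have e1 : s + (i : ZMod n) = s' + (j : ZMod n) := hx (congrArg Prod.fst hp)
  have e2 : t - (i : ZMod m) = t' - (j : ZMod m) := hy (congrArg Prod.snd hp)
  set k : ℕ := i + (Nat.lcm n m - j % Nat.lcm n m) with hk
  have h1 := cast_helper (n := n) hL (Nat.dvd_lcm_left n m) i j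
  have h2 := cast_helper (n := m) hL (Nat.dvd_lcm_right n m) i j
  have hs : s + (k : ZMod n) = s' := by rw [hk, h1]; linear_combination e1
  have ht : t - (k : ZMod m) = t' := by rw [hk, h2]; linear_combination e2
  rw [← hs, ← ht]
  exact (PXY_shift x y hL s t k).symm

lemma PXY_ncard (hL : 0 < Nat.lcm n m)
    (hx : Function.Injective x) (hy : Function.Injective y)
    (s : ZMod n) (t : ZMod m) :
    (PXY x y s t).ncard = Nat.lcm n m := by
  classical
  have heq : PXY x y s t =
      ↑((Finset.range (Nat.lcm n m)).image
        (fun i : ℕ => (x (s + (i : ZMod n)), y (t - (i : ZMod m))))) := by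
    ext p
    simp [PXY, Finset.mem_image, Finset.mem_range, eq_comm]
  rw [heq, Set.ncard_coe_finset, Finset.card_image_of_injOn, Finset.card_range]
  intro i hi j hj h
  simp only [Finset.mem_coe, Finset.mem_range] at hi hj
  simp only [Prod.mk.injEq] at h
  have hn' : (i : ZMod n) = (j : ZMod n) := by
    have e := hx h.1; linear_combination e
  have hm' : (i : ZMod m) = (j : ZMod m) := by
    have e := hy h.2; linear_combination -e
  have hmodn : i ≡ j [MOD n] := (ZMod.natCast_eq_natCast_iff i j n).mp hn'
  have hmodm : i ≡ j [MOD m] := (ZMod.natCast_eq_natCast_iff i j m).mp hm'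
  rcases le_total i j with hij | hij
  · have d1 : n ∣ j - i := (Nat.modEq_iff_dvd' hij).mp hmodn
    have d2 : m ∣ j - i := (Nat.modEq_iff_dvd' hij).mp hmodm
    have := Nat.eq_zero_of_dvd_of_lt (Nat.lcm_dvd d1 d2) (by omega)
    omega
  · have d1 : n ∣ i - j := (Nat.modEq_iff_dvd' hij).mp hmodn.symm
    have d2 : m ∣ i - j := (Nat.modEq_iff_dvd' hij).mp hmodm.symm
    have := Nat.eq_zero_of_dvd_of_lt (Nat.lcm_dvd d1 d2) (by omega)
    omega
end aux


lemma PYX_eq_PXY {V : Type*} {n m : ℕ} (x : ZMod n → V) (y : ZMod m → V)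
    (t : ZMod m) (s : ZMod n) : PYX x y t s = PXY y x t s := by
  ext p
  simp only [PYX, PXY, Set.mem_setOf_eq, Nat.lcm_comm]

lemma propXY {V : Type*} (A : V → V → Prop) {n m : ℕ}
    (x : ZMod n → V) (y : ZMod m → V)
    (hone : ∀ s t, Xor' (A (x s) (y t)) (A (y t) (x s)))
    (hngp : ¬ ∃ (s : ZMod n) (r : ZMod m), A (x s) (y r) ∧ A (y (r - 1)) (x (s + 1)))
    {s : ZMod n} {t : ZMod m} (h : A (x s) (y t)) :
    ∀ i : ℕ, A (x (s + (i : ZMod n))) (y (t - (i : ZMod m))) := by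
  intro i
  induction i with
  | zero => simpa using h
  | succ i ih =>
    by_contra hc
    push_cast at hc
    rcases hone (s + i + 1) (t - i - 1) with ⟨h1, -⟩ | ⟨h1, -⟩
    · have ea : s + ((i : ZMod n) + 1) = s + i + 1 := by ring
      have eb : t - ((i : ZMod m) + 1) = t - i - 1 := by ring
      rw [ea, eb] at hc
      exact hc h1
    · exact hngp ⟨s + i, t - i, ih, h1⟩

lemma propYX {V : Type*} (A : V → V → Prop) {n m : ℕ}
    (x : ZMod n → V) (y : ZMod m → V)
    (hone : ∀ s t, Xor' (A (x s) (y t)) (A (y t) (x s)))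
    (hngp : ¬ ∃ (s : ZMod n) (r : ZMod m), A (x s) (y r) ∧ A (y (r - 1)) (x (s + 1)))
    {t : ZMod m} {s : ZMod n} (h : A (y t) (x s)) :
    ∀ i : ℕ, A (y (t + (i : ZMod m))) (x (s - (i : ZMod n))) := by
  intro i
  induction i with
  | zero => simpa using h
  | succ i ih =>
    by_contra hc
    push_cast at hc
    rcases hone (s - i - 1) (t + i + 1) with ⟨h1, -⟩ | ⟨h1, -⟩
    · refine hngp ⟨s - i - 1, t + i + 1, h1, ?_⟩
      have e1 : t + (i : ZMod m) + 1 - 1 = t + i := by ring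
      have e2 : s - (i : ZMod n) - 1 + 1 = s - i := by ring
      rw [e1, e2]; exact ih
    · have ea : t + ((i : ZMod m) + 1) = t + i + 1 := by ring
      have eb : s - ((i : ZMod n) + 1) = s - i - 1 := by ring
      rw [ea, eb] at hc
      exact hc h1

/-- With no good pair, the exterior arcs are partitioned into parallel
classes: each class consists of arcs of D and lies entirely in (D₁,D₂) or in (D₂,D₁),
each class has exactly lcm(n,m) elements, and "lying in a common parallel class" is an
equivalence relation on the exterior arcs. -/
theorem stmt13 {V : Type*} (A : V → V → Prop) {n m : ℕ}
    (hn : 2 ≤ n) (hm : 2 ≤ m)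
    (x : ZMod n → V) (y : ZMod m → V)
    (hxinj : Function.Injective x) (hyinj : Function.Injective y)
    (hxcyc : ∀ i, A (x i) (x (i + 1))) (hycyc : ∀ i, A (y i) (y (i + 1)))
    (hdisj : ∀ s t, x s ≠ y t)
    (hcov : ∀ v : V, (∃ s, x s = v) ∨ (∃ t, y t = v))
    (hone : ∀ s t, Xor' (A (x s) (y t)) (A (y t) (x s)))
    (hngp : ¬ ∃ (s : ZMod n) (r : ZMod m), A (x s) (y r) ∧ A (y (r - 1)) (x (s + 1))) :
    (∀ s t, A (x s) (y t) → ∀ p ∈ PXY x y s t,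
        A p.1 p.2 ∧ p.1 ∈ Set.range x ∧ p.2 ∈ Set.range y) ∧
    (∀ t s, A (y t) (x s) → ∀ p ∈ PYX x y t s,
        A p.1 p.2 ∧ p.1 ∈ Set.range y ∧ p.2 ∈ Set.range x) ∧
    (∀ s t, A (x s) (y t) → (PXY x y s t).ncard = Nat.lcm n m) ∧
    (∀ t s, A (y t) (x s) → (PYX x y t s).ncard = Nat.lcm n m) ∧
    Equivalence
      (fun (a b : {p : V × V // A p.1 p.2 ∧
          ((p.1 ∈ Set.range x ∧ p.2 ∈ Set.range y) ∨
           (p.1 ∈ Set.range y ∧ p.2 ∈ Set.range x))}) =>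
        ∃ C : Set (V × V),
          ((∃ s t, A (x s) (y t) ∧ C = PXY x y s t) ∨
           (∃ t s, A (y t) (x s) ∧ C = PYX x y t s)) ∧
          (a : V × V) ∈ C ∧ (b : V × V) ∈ C) := by
  have hL : 0 < Nat.lcm n m := Nat.lcm_pos (by omega) (by omega)
  have hL' : 0 < Nat.lcm m n := by rwa [Nat.lcm_comm]
  refine ⟨?_, ?_, ?_, ?_, ?_, ?_, ?_⟩
  · rintro s t h p ⟨i, -, rfl⟩
    exact ⟨propXY A x y hone hngp h i, ⟨_, rfl⟩, ⟨_, rfl⟩⟩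
  · rintro t s h p ⟨i, -, rfl⟩
    exact ⟨propYX A x y hone hngp h i, ⟨_, rfl⟩, ⟨_, rfl⟩⟩
  · intro s t _
    exact PXY_ncard x y hL hxinj hyinj s t
  · intro t s _
    rw [PYX_eq_PXY, Nat.lcm_comm]
    exact PXY_ncard y x hL' hyinj hxinj t s
  · rintro ⟨p, hA, hext⟩
    rcases hext with ⟨⟨s, hs⟩, ⟨t, ht⟩⟩ | ⟨⟨t, ht⟩, ⟨s, hs⟩⟩
    · exact ⟨PXY x y s t, Or.inl ⟨s, t, by rw [hs, ht]; exact hA, rfl⟩,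
        ⟨0, hL, by simp [hs, ht]⟩, ⟨0, hL, by simp [hs, ht]⟩⟩
    · exact ⟨PYX x y t s, Or.inr ⟨t, s, by rw [hs, ht]; exact hA, rfl⟩,
        ⟨0, hL, by simp [hs, ht]⟩, ⟨0, hL, by simp [hs, ht]⟩⟩
  · rintro a b ⟨C, hC, ha, hb⟩
    exact ⟨C, hC, hb, ha⟩
  · rintro a b c ⟨C, hC, ha, hb⟩ ⟨C', hC', hb', hc⟩
    refine ⟨C, hC, ha, ?_⟩
    have hCC : C = C' := by
      rcases hC with ⟨s, t, -, rfl⟩ | ⟨t, s, -, rfl⟩ <;>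
        rcases hC' with ⟨s', t', -, rfl⟩ | ⟨t', s', -, rfl⟩
      · exact PXY_eq_of_mem x y hL hxinj hyinj hb hb'
      · obtain ⟨i, -, e1⟩ := hb
        obtain ⟨j, -, e2⟩ := hb'
        exact absurd (congrArg Prod.fst (e1.symm.trans e2)) (hdisj _ _)
      · obtain ⟨i, -, e1⟩ := hb
        obtain ⟨j, -, e2⟩ := hb'
        exact absurd (congrArg Prod.fst (e2.symm.trans e1)) (hdisj _ _)
      · rw [PYX_eq_PXY] at hb hb'
        rw [PYX_eq_PXY, PYX_eq_PXY]
        exact PXY_eq_of_mem y x hL' hyinj hxinj hb hb'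
    rw [hCC]
    exact hc
end

section
/- Let D be a generalized sum of two vertex-disjoint digraphs D₁, D₂ with Hamiltonian cycles C₁ of length n and C₂ of length m, having no good pair of arcs between C₁ and C₂. Then for every vertex w of D and every exterior arc (u, v) of D, there exists at least one arc in the parallel class P_{u→v} that is incident with w. -/
/-- With no good pair, for every vertex w and every exterior arc (u,v) of D,
some arc of the parallel class P_{u→v} is incident with w. -/
theorem stmt14 {V : Type*} (A : V → V → Prop) {n m : ℕ}
    (hn : 2 ≤ n) (hm : 2 ≤ m)
    (x : ZMod n → V) (y : ZMod m → V)
    (hxinj : Function.Injective x) (hyinj : Function.Injective y)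
    (hxcyc : ∀ i, A (x i) (x (i + 1))) (hycyc : ∀ i, A (y i) (y (i + 1)))
    (hdisj : ∀ s t, x s ≠ y t)
    (hcov : ∀ v : V, (∃ s, x s = v) ∨ (∃ t, y t = v))
    (hone : ∀ s t, Xor' (A (x s) (y t)) (A (y t) (x s)))
    (hngp : ¬ ∃ (s : ZMod n) (r : ZMod m), A (x s) (y r) ∧ A (y (r - 1)) (x (s + 1))) :
    (∀ w : V, ∀ s t, A (x s) (y t) →
        ∃ p ∈ PXY x y s t, A p.1 p.2 ∧ (p.1 = w ∨ p.2 = w)) ∧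
    (∀ w : V, ∀ t s, A (y t) (x s) →
        ∃ p ∈ PYX x y t s, A p.1 p.2 ∧ (p.1 = w ∨ p.2 = w)) := by
  haveI : NeZero n := ⟨by omega⟩
  haveI : NeZero m := ⟨by omega⟩
  have hlcm : 0 < Nat.lcm n m := Nat.lcm_pos (by omega) (by omega)
  have hnl : n ≤ Nat.lcm n m := Nat.le_of_dvd hlcm (Nat.dvd_lcm_left n m)
  have hml : m ≤ Nat.lcm n m := Nat.le_of_dvd hlcm (Nat.dvd_lcm_right n m)
  have castn : ∀ a : ZMod n, ((a.val : ℕ) : ZMod n) = a := by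
    intro a; simp [ZMod.natCast_val, ZMod.cast_id]
  have castm : ∀ a : ZMod m, ((a.val : ℕ) : ZMod m) = a := by
    intro a; simp [ZMod.natCast_val, ZMod.cast_id]
  have stepXY : ∀ (a : ZMod n) (b : ZMod m), A (x a) (y b) → A (x (a + 1)) (y (b - 1)) := by
    intro a b h
    rcases hone (a + 1) (b - 1) with ⟨h1, _⟩ | ⟨h2, _⟩
    · exact h1
    · exact absurd ⟨a, b, h, h2⟩ hngp
  have stepYX : ∀ (a : ZMod n) (b : ZMod m), A (y b) (x a) → A (y (b + 1)) (x (a - 1)) := by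
    intro a b h
    rcases hone (a - 1) (b + 1) with ⟨h1, _⟩ | ⟨h2, _⟩
    · exact absurd ⟨a - 1, b + 1, h1, by simpa using h⟩ hngp
    · exact h2
  have iterXY : ∀ s t, A (x s) (y t) → ∀ i : ℕ, A (x (s + (i : ZMod n))) (y (t - (i : ZMod m))) := by
    intro s t h i
    induction i with
    | zero => simpa using h
    | succ k ih =>
      have h2 := stepXY _ _ ih
      push_cast
      convert h2 using 2 <;> ring
  have iterYX : ∀ t s, A (y t) (x s) → ∀ i : ℕ, A (y (t + (i : ZMod m))) (x (s - (i : ZMod n))) := by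
    intro t s h i
    induction i with
    | zero => simpa using h
    | succ k ih =>
      have h2 := stepYX _ _ ih
      push_cast
      convert h2 using 2 <;> ring
  constructor
  · intro w s t h
    rcases hcov w with ⟨s', rfl⟩ | ⟨t', rfl⟩
    · refine ⟨_, ⟨(s' - s).val, lt_of_lt_of_le (ZMod.val_lt _) hnl, rfl⟩,
        iterXY s t h _, Or.inl ?_⟩
      rw [castn, add_sub_cancel]
    · refine ⟨_, ⟨(t - t').val, lt_of_lt_of_le (ZMod.val_lt _) hml, rfl⟩,
        iterXY s t h _, Or.inr ?_⟩
      rw [castm, sub_sub_cancel]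
  · intro w t s h
    rcases hcov w with ⟨s', rfl⟩ | ⟨t', rfl⟩
    · refine ⟨_, ⟨(s - s').val, lt_of_lt_of_le (ZMod.val_lt _) hnl, rfl⟩,
        iterYX t s h _, Or.inr ?_⟩
      rw [castn, sub_sub_cancel]
    · refine ⟨_, ⟨(t' - t).val, lt_of_lt_of_le (ZMod.val_lt _) hml, rfl⟩,
        iterYX t s h _, Or.inl ?_⟩
      rw [castm, add_sub_cancel]
end

section
/- Every strong generalized sum of k ≥ 2 pairwise vertex-disjoint Hamiltonian digraphs that contains no good cycle is Hamiltonian. -/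
/-- Generalized sum with vertex set `U` of the family of parts `S i`. -/
def GenSumFam {V ι : Type*} (A : V → V → Prop) (U : Set V) (S : ι → Set V) : Prop :=
  (Pairwise fun i j => Disjoint (S i) (S j)) ∧ (⋃ i, S i) = U ∧
    ∀ i j, i ≠ j → ∀ u ∈ S i, ∀ v ∈ S j, Xor' (A u v) (A v u)

/-- The set `s` carries a Hamiltonian directed cycle. -/
def HamOn {V : Type*} (A : V → V → Prop) (s : Set V) : Prop :=
  ∃ n : ℕ, 2 ≤ n ∧ ∃ z : ZMod n → V, Function.Injective z ∧
    (∀ i, A (z i) (z (i + 1))) ∧ Set.range z = s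

/-- An exterior arc: an arc between vertices lying in different parts. -/
def ExtArc {V ι : Type*} (A : V → V → Prop) (S : ι → Set V) (u v : V) : Prop :=
  A u v ∧ ∃ i j, i ≠ j ∧ u ∈ S i ∧ v ∈ S j

/-- A good cycle: an anti-directed 4-cycle v₀v₁v₂v₃v₀ with
{(v₀,v₁),(v₂,v₃)} ⊆ E_⊕ or {(v₂,v₁),(v₀,v₃)} ⊆ E_⊕. -/
def GoodCycle {V ι : Type*} (A : V → V → Prop) (S : ι → Set V) : Prop :=
  ∃ v₀ v₁ v₂ v₃ : V, List.Pairwise (· ≠ ·) [v₀, v₁, v₂, v₃] ∧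
    A v₀ v₁ ∧ A v₂ v₁ ∧ A v₂ v₃ ∧ A v₀ v₃ ∧
    ((ExtArc A S v₀ v₁ ∧ ExtArc A S v₂ v₃) ∨ (ExtArc A S v₂ v₁ ∧ ExtArc A S v₀ v₃))

private lemma descent {P : ℕ → Prop} (h0 : P 0) {t : ℕ} (ht : ¬ P t) :
    ∃ p, P p ∧ ¬ P (p + 1) := by
  induction t with
  | zero => exact absurd h0 ht
  | succ t ih =>
    by_cases h : P t
    · exact ⟨t, h, ht⟩
    · exact ih h


-- test snippet for m = n case, assuming context; we simulate with a lemma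

private lemma caseEq {V : Type*} (A : V → V → Prop) {m : ℕ} (hm : 2 ≤ m)
    (z1 : ZMod m → V) (z2 : ZMod m → V)
    (h1 : Function.Injective z1) (h2 : Function.Injective z2)
    (hdisj : ∀ i j, z1 i ≠ z2 j)
    (notF : ∀ i j, ¬ A (z1 i) (z2 j) ↔ A (z2 j) (z1 i))
    (hvcM : ∀ a : ZMod m, ((a.val : ℕ) : ZMod m) = a)
    (diag : ∀ (p : ℕ) (i : ZMod m) (j : ZMod m),
      A (z1 (i + (p : ℕ))) (z2 (j - (p : ℕ))) ↔ A (z1 i) (z2 j))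
    (hTex : ∃ i j, A (z1 i) (z2 j))
    (hFex : ∃ i j, ¬ A (z1 i) (z2 j)) :
    ∃ N : ℕ, 2 ≤ N ∧ ∃ w : ZMod N → V, Function.Injective w ∧
      (∀ r, A (w r) (w (r + 1))) ∧ Set.range w = Set.range z1 ∪ Set.range z2 := by
  haveI : NeZero m := ⟨by omega⟩
  -- find a "descent" cell: true at (i₀,j₀), false at (i₀, j₀+1)
  obtain ⟨i₁, j₁, hT1⟩ := hTex
  obtain ⟨i₂, j₂, hF2⟩ := hFex
  have hF3 : ¬ A (z1 i₁) (z2 (j₂ - ((i₁ - i₂).val : ℕ))) := by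
    intro h
    apply hF2
    have e : i₂ + (((i₁ - i₂).val : ℕ) : ZMod m) = i₁ := by rw [hvcM]; ring
    exact (diag (i₁ - i₂).val i₂ j₂).mp (by rwa [e])
  have hPt : ¬ A (z1 i₁) (z2 (j₁ + (((j₂ - ((i₁ - i₂).val : ℕ)) - j₁).val : ℕ))) := by
    have e : j₁ + ((((j₂ - ((i₁ - i₂).val : ℕ)) - j₁).val : ℕ) : ZMod m)
        = j₂ - ((i₁ - i₂).val : ℕ) := by rw [hvcM]; ring
    rwa [e]
  obtain ⟨p, hp1, hp2⟩ := descent (P := fun p => A (z1 i₁) (z2 (j₁ + (p : ℕ))))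
    (by simpa using hT1) hPt
  set i₀ := i₁ with hi₀
  set j₀ := j₁ + ((p : ℕ) : ZMod m) with hj₀
  have hT0 : A (z1 i₀) (z2 j₀) := hp1
  have hF0 : ¬ A (z1 i₀) (z2 (j₀ + 1)) := by
    intro h
    apply hp2
    have e : j₁ + ((p + 1 : ℕ) : ZMod m) = j₀ + 1 := by rw [hj₀]; push_cast; ring
    rwa [e]
  have arc1 : ∀ q : ℕ, A (z1 (i₀ + (q : ℕ))) (z2 (j₀ - (q : ℕ))) :=
    fun q => (diag q i₀ j₀).mpr hT0
  have arc2 : ∀ q : ℕ, A (z2 (j₀ - (q : ℕ))) (z1 (i₀ + (q : ℕ) + 1)) := by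
    intro q
    rw [← notF]
    intro h
    apply hF0
    refine (diag (q + 1) i₀ (j₀ + 1)).mp ?_
    have e1 : i₀ + ((q + 1 : ℕ) : ZMod m) = i₀ + (q : ℕ) + 1 := by push_cast; ring
    have e2 : (j₀ + 1) - ((q + 1 : ℕ) : ZMod m) = j₀ - (q : ℕ) := by push_cast; ring
    rw [e1, e2]
    exact h
  -- the alternating Hamiltonian cycle of length 2m
  haveI : NeZero (m + m) := ⟨by omega⟩
  haveI : Fact (1 < m + m) := ⟨by omega⟩
  refine ⟨m + m, by omega, ?_⟩
  set w : ZMod (m + m) → V := fun r =>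
    if r.val % 2 = 0 then z1 (i₀ + ((r.val / 2 : ℕ) : ZMod m))
    else z2 (j₀ - ((r.val / 2 : ℕ) : ZMod m)) with hw
  have wc : ∀ r : ZMod (m + m),
      (r.val % 2 = 0 ∧ w r = z1 (i₀ + ((r.val / 2 : ℕ) : ZMod m))) ∨
      (r.val % 2 = 1 ∧ w r = z2 (j₀ - ((r.val / 2 : ℕ) : ZMod m))) := by
    intro r
    by_cases hp : r.val % 2 = 0
    · left; exact ⟨hp, by simp only [hw]; rw [if_pos hp]⟩
    · right; exact ⟨by omega, by simp only [hw]; rw [if_neg hp]⟩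
  have hsucc : ∀ r : ZMod (m + m), (r + 1).val = (r.val + 1) % (m + m) := by
    intro r
    rw [ZMod.val_add, ZMod.val_one]
  refine ⟨w, ?_, ?_, ?_⟩
  · -- injective
    intro r r' hrr
    have hv := ZMod.val_lt r
    have hv' := ZMod.val_lt r'
    have key : r.val = r'.val := by
      rcases wc r with ⟨hp, hf⟩ | ⟨hp, hf⟩ <;> rcases wc r' with ⟨hp', hf'⟩ | ⟨hp', hf'⟩ <;>
        rw [hf, hf'] at hrr
      · have hc := add_left_cancel (h1 hrr)
        rw [ZMod.natCast_eq_natCast_iff'] at hc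
        rw [Nat.mod_eq_of_lt (by omega), Nat.mod_eq_of_lt (by omega)] at hc
        omega
      · exact absurd hrr (hdisj _ _)
      · exact absurd hrr.symm (hdisj _ _)
      · have hc := sub_right_inj.mp (h2 hrr)
        rw [ZMod.natCast_eq_natCast_iff'] at hc
        rw [Nat.mod_eq_of_lt (by omega), Nat.mod_eq_of_lt (by omega)] at hc
        omega
    exact ZMod.val_injective _ key
  · -- arcs
    intro r
    have hv := ZMod.val_lt r
    have hend : (r.val + 1 < m + m ∧ (r + 1).val = r.val + 1) ∨
        (r.val + 1 = m + m ∧ (r + 1).val = 0) := by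
      by_cases hlt : r.val + 1 < m + m
      · left; exact ⟨hlt, by rw [hsucc, Nat.mod_eq_of_lt hlt]⟩
      · right
        refine ⟨by omega, ?_⟩
        rw [hsucc, show r.val + 1 = m + m from by omega, Nat.mod_self]
    rcases wc r with ⟨hp, hf⟩ | ⟨hp, hf⟩ <;>
      rcases wc (r + 1) with ⟨hp2, hf2⟩ | ⟨hp2, hf2⟩ <;> rw [hf, hf2] <;>
      rcases hend with ⟨hlt, e⟩ | ⟨hlt, e⟩
    · exfalso; omega
    · exfalso; omega
    · -- even → odd
      rw [show (r + 1).val / 2 = r.val / 2 from by omega]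
      exact arc1 _
    · exfalso; omega
    · -- odd → even, interior
      rw [show (r + 1).val / 2 = r.val / 2 + 1 from by omega]
      have e3 : ((r.val / 2 + 1 : ℕ) : ZMod m) = ((r.val / 2 : ℕ) : ZMod m) + 1 := by
        push_cast; ring
      rw [e3, ← add_assoc]
      exact arc2 _
    · -- odd → even, wrap-around
      have e2 : r.val / 2 = m - 1 := by omega
      rw [e, e2]
      have harc := arc2 (m - 1)
      have e4 : ((m - 1 : ℕ) : ZMod m) + 1 = 0 := by
        have e5 : ((m - 1 : ℕ) : ZMod m) + ((1 : ℕ) : ZMod m) = ((m - 1 + 1 : ℕ) : ZMod m) :=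
          (Nat.cast_add _ _).symm
        rw [Nat.cast_one] at e5
        rw [e5, show m - 1 + 1 = m from by omega, ZMod.natCast_self]
      have e3 : i₀ + ((m - 1 : ℕ) : ZMod m) + 1 = i₀ + (((0 : ℕ) : ZMod m)) := by
        rw [add_assoc, e4]
        push_cast
        ring
      rwa [e3] at harc
    · exfalso; omega
    · exfalso; omega
  · -- range
    apply Set.Subset.antisymm
    · rintro x ⟨r, rfl⟩
      rcases wc r with ⟨hp, hf⟩ | ⟨hp, hf⟩
      · rw [hf]; exact Or.inl ⟨_, rfl⟩
      · rw [hf]; exact Or.inr ⟨_, rfl⟩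
    · rintro x (⟨q, rfl⟩ | ⟨q, rfl⟩)
      · refine ⟨((2 * (q - i₀).val : ℕ) : ZMod (m + m)), ?_⟩
        have hlt : 2 * (q - i₀).val < m + m := by
          have := ZMod.val_lt (q - i₀); omega
        have hv2 : ((2 * (q - i₀).val : ℕ) : ZMod (m + m)).val = 2 * (q - i₀).val :=
          ZMod.val_natCast_of_lt hlt
        rcases wc _ with ⟨hp, hf⟩ | ⟨hp, hf⟩
        · rw [hf, hv2, show 2 * (q - i₀).val / 2 = (q - i₀).val from by omega, hvcM]
          congr 1
          ring
        · rw [hv2] at hp; omega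
      · refine ⟨((2 * (j₀ - q).val + 1 : ℕ) : ZMod (m + m)), ?_⟩
        have hlt : 2 * (j₀ - q).val + 1 < m + m := by
          have := ZMod.val_lt (j₀ - q); omega
        have hv2 : ((2 * (j₀ - q).val + 1 : ℕ) : ZMod (m + m)).val = 2 * (j₀ - q).val + 1 :=
          ZMod.val_natCast_of_lt hlt
        rcases wc _ with ⟨hp, hf⟩ | ⟨hp, hf⟩
        · rw [hv2] at hp; omega
        · rw [hf, hv2, show (2 * (j₀ - q).val + 1) / 2 = (j₀ - q).val from by omega, hvcM]
          congr 1
          ring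

private lemma caseLt {V : Type*} (A : V → V → Prop) {n : ℕ} (hn2 : 2 < n)
    (z1 : ZMod 2 → V) (z2 : ZMod n → V)
    (h1 : Function.Injective z1) (h2 : Function.Injective z2)
    (hc2 : ∀ j, A (z2 j) (z2 (j + 1)))
    (hdisj : ∀ i j, z1 i ≠ z2 j)
    (notF : ∀ i j, ¬ A (z1 i) (z2 j) ↔ A (z2 j) (z1 i))
    (hvcN : ∀ a : ZMod n, ((a.val : ℕ) : ZMod n) = a)
    (alt : ∀ i j, A (z1 (i + 1)) (z2 j) ↔ ¬ A (z1 i) (z2 j))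
    (diag1 : ∀ i j, A (z1 i) (z2 (j + 1)) ↔ A (z1 (i + 1)) (z2 j)) :
    ∃ N : ℕ, 2 ≤ N ∧ ∃ w : ZMod N → V, Function.Injective w ∧
      (∀ r, A (w r) (w (r + 1))) ∧ Set.range w = Set.range z1 ∪ Set.range z2 := by
  haveI : NeZero n := ⟨by omega⟩
  obtain ⟨i₀, hT0⟩ : ∃ i₀, A (z1 i₀) (z2 0) := by
    by_cases hb : A (z1 0) (z2 0)
    · exact ⟨0, hb⟩
    · exact ⟨1, by rw [show (1 : ZMod 2) = 0 + 1 from by decide, alt]; exact hb⟩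
  have fp : ∀ p : ℕ, A (z1 i₀) (z2 ((p : ℕ) : ZMod n)) ↔ Even p := by
    intro p
    induction p with
    | zero =>
      simp only [Nat.cast_zero]
      exact iff_of_true hT0 Even.zero
    | succ p ih =>
      have e : (((p + 1 : ℕ) : ℕ) : ZMod n) = ((p : ℕ) : ZMod n) + 1 := by push_cast; ring
      rw [e, diag1, alt, ih, Nat.even_add_one]
  have hnev : Even n := by
    have := (fp n).mp (by rw [ZMod.natCast_self]; exact hT0)
    exact this
  have hn4 : 4 ≤ n := by
    obtain ⟨c, hc⟩ := hnev
    omega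
  have hodd1 : ¬ Even (n - 1) := by
    obtain ⟨c, hc⟩ := hnev
    rintro ⟨d, hd⟩
    omega
  have hev2 : Even (n - 2) := by
    obtain ⟨c, hc⟩ := hnev
    exact ⟨c - 1, by omega⟩
  -- arc helpers
  have aT : ∀ p : ℕ, Even p → A (z1 i₀) (z2 ((p : ℕ) : ZMod n)) := fun p hp => (fp p).mpr hp
  have aT' : ∀ p : ℕ, ¬ Even p → A (z1 (i₀ + 1)) (z2 ((p : ℕ) : ZMod n)) :=
    fun p hp => (alt _ _).mpr (fun h => hp ((fp p).mp h))
  have aF : ∀ p : ℕ, ¬ Even p → A (z2 ((p : ℕ) : ZMod n)) (z1 i₀) :=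
    fun p hp => (notF _ _).mp (fun h => hp ((fp p).mp h))
  have aF' : ∀ p : ℕ, Even p → A (z2 ((p : ℕ) : ZMod n)) (z1 (i₀ + 1)) :=
    fun p hp => (notF _ _).mp (fun h => (alt _ _).mp h ((fp p).mpr hp))
  haveI : NeZero (n + 2) := ⟨by omega⟩
  haveI : Fact (1 < n + 2) := ⟨by omega⟩
  refine ⟨n + 2, by omega, ?_⟩
  set w : ZMod (n + 2) → V := fun r =>
    if r.val = 0 then z1 i₀
    else if r.val = n then z1 (i₀ + 1)
    else if r.val = n + 1 then z2 ((n - 1 : ℕ) : ZMod n)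
    else z2 ((r.val - 1 : ℕ) : ZMod n) with hw
  have wc : ∀ r : ZMod (n + 2),
      (r.val = 0 ∧ w r = z1 i₀) ∨
      (r.val = n ∧ w r = z1 (i₀ + 1)) ∨
      (r.val = n + 1 ∧ w r = z2 ((n - 1 : ℕ) : ZMod n)) ∨
      (1 ≤ r.val ∧ r.val ≤ n - 1 ∧ w r = z2 ((r.val - 1 : ℕ) : ZMod n)) := by
    intro r
    have hv := ZMod.val_lt r
    by_cases h0 : r.val = 0
    · exact Or.inl ⟨h0, by simp only [hw]; rw [if_pos h0]⟩
    by_cases hN : r.val = n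
    · exact Or.inr (Or.inl ⟨hN, by simp only [hw]; rw [if_neg h0, if_pos hN]⟩)
    by_cases hN1 : r.val = n + 1
    · exact Or.inr (Or.inr (Or.inl ⟨hN1, by
        simp only [hw]; rw [if_neg h0, if_neg hN, if_pos hN1]⟩))
    · exact Or.inr (Or.inr (Or.inr ⟨by omega, by omega, by
        simp only [hw]; rw [if_neg h0, if_neg hN, if_neg hN1]⟩))
  have hsucc : ∀ r : ZMod (n + 2), (r + 1).val = (r.val + 1) % (n + 2) := by
    intro r
    rw [ZMod.val_add, ZMod.val_one]
  have z2cast : ∀ a b : ℕ, a < n → b < n → ((a : ℕ) : ZMod n) = ((b : ℕ) : ZMod n) → a = b := by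
    intro a b ha hb h
    rw [ZMod.natCast_eq_natCast_iff'] at h
    rwa [Nat.mod_eq_of_lt ha, Nat.mod_eq_of_lt hb] at h
  have z1ne : z1 i₀ ≠ z1 (i₀ + 1) := by
    intro h
    have := h1 h
    have : (0 : ZMod 2) = 1 := by
      have h' := left_eq_add.mp this
      exact h'.symm ▸ rfl
    exact absurd this (by decide)
  refine ⟨w, ?_, ?_, ?_⟩
  · -- injectivity
    intro r r' hrr
    have hv := ZMod.val_lt r
    have hv' := ZMod.val_lt r'
    have key : r.val = r'.val := by
      rcases wc r with ⟨e, hf⟩ | ⟨e, hf⟩ | ⟨e, hf⟩ | ⟨e1, e2, hf⟩ <;>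
        rcases wc r' with ⟨e', hf'⟩ | ⟨e', hf'⟩ | ⟨e', hf'⟩ | ⟨e1', e2', hf'⟩ <;>
        rw [hf, hf'] at hrr
      · omega
      · exact absurd hrr z1ne
      · exact absurd hrr (hdisj _ _)
      · exact absurd hrr (hdisj _ _)
      · exact absurd hrr.symm z1ne
      · omega
      · exact absurd hrr (hdisj _ _)
      · exact absurd hrr (hdisj _ _)
      · exact absurd hrr.symm (hdisj _ _)
      · exact absurd hrr.symm (hdisj _ _)
      · omega
      · have := z2cast _ _ (by omega) (by omega) (h2 hrr)
        omega
      · exact absurd hrr.symm (hdisj _ _)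
      · exact absurd hrr.symm (hdisj _ _)
      · have := z2cast _ _ (by omega) (by omega) (h2 hrr)
        omega
      · have := z2cast _ _ (by omega) (by omega) (h2 hrr)
        omega
    exact ZMod.val_injective _ key
  · -- arcs
    intro r
    have hv := ZMod.val_lt r
    have hend : (r.val + 1 < n + 2 ∧ (r + 1).val = r.val + 1) ∨
        (r.val + 1 = n + 2 ∧ (r + 1).val = 0) := by
      by_cases hlt : r.val + 1 < n + 2
      · left; exact ⟨hlt, by rw [hsucc, Nat.mod_eq_of_lt hlt]⟩
      · right
        refine ⟨by omega, ?_⟩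
        rw [hsucc, show r.val + 1 = n + 2 from by omega, Nat.mod_self]
    rcases wc r with ⟨e, hf⟩ | ⟨e, hf⟩ | ⟨e, hf⟩ | ⟨e1, e2, hf⟩ <;>
      rcases wc (r + 1) with ⟨e', hf'⟩ | ⟨e', hf'⟩ | ⟨e', hf'⟩ | ⟨e1', e2', hf'⟩ <;>
      rw [hf, hf'] <;>
      [skip; skip; skip; skip; skip; skip; skip; skip; skip; skip; skip; skip;
       skip; skip; skip; skip] <;> rcases hend with ⟨hlt, he⟩ | ⟨hlt, he⟩
    all_goals try (exfalso; omega)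
    · -- 0 → 1 : z1 i₀ → z2 0
      rw [show (r + 1).val - 1 = 0 from by omega]
      exact aT 0 Even.zero
    · -- n → n+1 : z1 (i₀+1) → z2 (n-1)
      exact aT' (n - 1) hodd1
    · -- n+1 → 0 : z2 (n-1) → z1 i₀
      exact aF (n - 1) hodd1
    · -- n-1 → n : z2 (n-2) → z1 (i₀+1)
      rw [show r.val - 1 = n - 2 from by omega]
      exact aF' (n - 2) hev2
    · -- interior z2 cycle
      rw [show (r + 1).val - 1 = (r.val - 1) + 1 from by omega]
      have e3 : (((r.val - 1) + 1 : ℕ) : ZMod n) = ((r.val - 1 : ℕ) : ZMod n) + 1 := by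
        push_cast; ring
      rw [e3]
      exact hc2 _
  · -- range
    apply Set.Subset.antisymm
    · rintro x ⟨r, rfl⟩
      rcases wc r with ⟨e, hf⟩ | ⟨e, hf⟩ | ⟨e, hf⟩ | ⟨e1, e2, hf⟩ <;> rw [hf]
      · exact Or.inl ⟨_, rfl⟩
      · exact Or.inl ⟨_, rfl⟩
      · exact Or.inr ⟨_, rfl⟩
      · exact Or.inr ⟨_, rfl⟩
    · rintro x (⟨q, rfl⟩ | ⟨q, rfl⟩)
      · have h2cases : ∀ x : ZMod 2, x = 0 ∨ x = 1 := by decide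
        rcases h2cases (q - i₀) with hq | hq
        · have hqe : q = i₀ := by
            have := sub_eq_zero.mp hq
            exact this
          refine ⟨0, ?_⟩
          rcases wc 0 with ⟨e, hf⟩ | ⟨e, hf⟩ | ⟨e, hf⟩ | ⟨e1, e2, hf⟩ <;>
            rw [ZMod.val_zero] at * <;> first
          | omega
          | (rw [hf, hqe])
        · have hqe : q = i₀ + 1 := by
            have := eq_add_of_sub_eq hq
            rw [this]; ring
          refine ⟨((n : ℕ) : ZMod (n + 2)), ?_⟩
          have hvn : (((n : ℕ) : ZMod (n + 2))).val = n := ZMod.val_natCast_of_lt (by omega)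
          rcases wc ((n : ℕ) : ZMod (n + 2)) with ⟨e, hf⟩ | ⟨e, hf⟩ | ⟨e, hf⟩ | ⟨e1, e2, hf⟩ <;>
            rw [hvn] at * <;> first
          | omega
          | (rw [hf, hqe])
      · set c := (q - 0).val with hcq
        have hcv : ((c : ℕ) : ZMod n) = q := by rw [hcq, hvcN]; ring
        have hclt : c < n := ZMod.val_lt _
        by_cases hce : c = n - 1
        · refine ⟨((n + 1 : ℕ) : ZMod (n + 2)), ?_⟩
          have hvn : (((n + 1 : ℕ) : ZMod (n + 2))).val = n + 1 :=
            ZMod.val_natCast_of_lt (by omega)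
          rcases wc ((n + 1 : ℕ) : ZMod (n + 2)) with ⟨e, hf⟩ | ⟨e, hf⟩ | ⟨e, hf⟩ |
            ⟨e1, e2, hf⟩ <;> rw [hvn] at * <;> first
          | omega
          | (rw [hf, ← hce, hcv])
        · refine ⟨((c + 1 : ℕ) : ZMod (n + 2)), ?_⟩
          have hvn : (((c + 1 : ℕ) : ZMod (n + 2))).val = c + 1 :=
            ZMod.val_natCast_of_lt (by omega)
          rcases wc ((c + 1 : ℕ) : ZMod (n + 2)) with ⟨e, hf⟩ | ⟨e, hf⟩ | ⟨e, hf⟩ |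
            ⟨e1, e2, hf⟩ <;> rw [hvn] at * <;> first
          | omega
          | (rw [hf, show c + 1 - 1 = c from by omega, hcv])

private lemma pw4 {α : Type*} {a b c d : α} (h1 : a ≠ b) (h2 : a ≠ c) (h3 : a ≠ d)
    (h4 : b ≠ c) (h5 : b ≠ d) (h6 : c ≠ d) : List.Pairwise (· ≠ ·) [a, b, c, d] := by
  simp [List.pairwise_cons]
  tauto

private lemma core {V : Type*} (A : V → V → Prop) {m n : ℕ} (hm : 2 ≤ m) (hn : 2 ≤ n)
    (hmn : m ≤ n)
    (z1 : ZMod m → V) (z2 : ZMod n → V)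
    (h1 : Function.Injective z1) (h2 : Function.Injective z2)
    (hc1 : ∀ i, A (z1 i) (z1 (i + 1))) (hc2 : ∀ j, A (z2 j) (z2 (j + 1)))
    (hdisj : ∀ i j, z1 i ≠ z2 j)
    (hxor : ∀ i j, Xor' (A (z1 i) (z2 j)) (A (z2 j) (z1 i)))
    (hstep : ∀ i j, A (z1 i) (z2 (j + 1)) → A (z1 (i + 1)) (z2 j))
    (hrectT : ∀ i i' j j', i ≠ i' → j ≠ j' → A (z1 i) (z2 j) → A (z1 i) (z2 j') →
      A (z1 i') (z2 j) → A (z1 i') (z2 j') → False)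
    (hrectF : ∀ i i' j j', i ≠ i' → j ≠ j' → A (z2 j) (z1 i) → A (z2 j') (z1 i) →
      A (z2 j) (z1 i') → A (z2 j') (z1 i') → False) :
    ∃ N : ℕ, 2 ≤ N ∧ ∃ w : ZMod N → V, Function.Injective w ∧
      (∀ r, A (w r) (w (r + 1))) ∧ Set.range w = Set.range z1 ∪ Set.range z2 := by
  haveI : NeZero m := ⟨by omega⟩
  haveI : NeZero n := ⟨by omega⟩
  haveI : Fact (1 < m) := ⟨by omega⟩
  haveI : Fact (1 < n) := ⟨by omega⟩
  have notF : ∀ i j, ¬ A (z1 i) (z2 j) ↔ A (z2 j) (z1 i) := by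
    intro i j
    rcases hxor i j with ⟨ha, hb⟩ | ⟨ha, hb⟩ <;> constructor <;> tauto
  -- basic ZMod facts
  have oneM : (1 : ZMod m) ≠ 0 := by
    intro h
    have hv := ZMod.val_one m
    rw [h, ZMod.val_zero] at hv
    omega
  have oneN : (1 : ZMod n) ≠ 0 := by
    intro h
    have hv := ZMod.val_one n
    rw [h, ZMod.val_zero] at hv
    omega
  have addM : ∀ i : ZMod m, i ≠ i + 1 := by
    intro i h
    exact oneM (by linear_combination h.symm)
  have addN : ∀ j : ZMod n, j ≠ j + 1 := by
    intro j h
    exact oneN (by linear_combination h.symm)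
  have hvcM : ∀ a : ZMod m, ((a.val : ℕ) : ZMod m) = a :=
    fun a => (ZMod.natCast_val a).trans (ZMod.cast_id _ _)
  have hvcN : ∀ a : ZMod n, ((a.val : ℕ) : ZMod n) = a :=
    fun a => (ZMod.natCast_val a).trans (ZMod.cast_id _ _)
  -- diagonal propagation
  have hstep1 : ∀ (i : ZMod m) (j : ZMod n), A (z1 i) (z2 j) → A (z1 (i + 1)) (z2 (j - 1)) := by
    intro i j h
    have h' := hstep i (j - 1)
    rw [sub_add_cancel] at h'
    exact h' h
  have diagF : ∀ (p : ℕ) (i : ZMod m) (j : ZMod n), A (z1 i) (z2 j) →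
      A (z1 (i + (p : ℕ))) (z2 (j - (p : ℕ))) := by
    intro p
    induction p with
    | zero => intro i j h; simpa using h
    | succ p ih =>
      intro i j h
      have e1 : (i + ((p + 1 : ℕ) : ZMod m)) = (i + (p : ℕ)) + 1 := by push_cast; ring
      have e2 : (j - ((p + 1 : ℕ) : ZMod n)) = (j - (p : ℕ)) - 1 := by push_cast; ring
      rw [e1, e2]
      exact hstep1 _ _ (ih i j h)
  have diag : ∀ (p : ℕ) (i : ZMod m) (j : ZMod n),
      A (z1 (i + (p : ℕ))) (z2 (j - (p : ℕ))) ↔ A (z1 i) (z2 j) := by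
    intro p i j
    constructor
    · intro h
      have hmn1 : 1 ≤ m * n := by
        have := Nat.mul_le_mul hm hn
        omega
      obtain ⟨c, hc⟩ := Nat.exists_eq_add_of_le hmn1
      have heq : p + p * (m * n - 1) = p * (m * n) := by
        rw [hc]
        have e : 1 + c - 1 = c := by omega
        rw [e]
        ring
      have h2' := diagF (p * (m * n - 1)) _ _ h
      have hzM : ((p : ZMod m) + ((p * (m * n - 1) : ℕ) : ZMod m)) = 0 := by
        rw [← Nat.cast_add, heq, show p * (m * n) = (p * n) * m from by ring]
        push_cast
        simp [ZMod.natCast_self]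
      have hzN : ((p : ZMod n) + ((p * (m * n - 1) : ℕ) : ZMod n)) = 0 := by
        rw [← Nat.cast_add, heq, show p * (m * n) = (p * m) * n from by ring]
        push_cast
        simp [ZMod.natCast_self]
      have e1 : (i + (p : ℕ)) + ((p * (m * n - 1) : ℕ) : ZMod m) = i := by
        rw [add_assoc, hzM, add_zero]
      have e2 : (j - (p : ℕ)) - ((p * (m * n - 1) : ℕ) : ZMod n) = j := by
        rw [sub_sub, hzN, sub_zero]
      rwa [e1, e2] at h2'
    · exact diagF p i j
  have diag1 : ∀ (i : ZMod m) (j : ZMod n), A (z1 i) (z2 (j + 1)) ↔ A (z1 (i + 1)) (z2 j) := by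
    intro i j
    have h := diag 1 i (j + 1)
    have e1 : i + ((1 : ℕ) : ZMod m) = i + 1 := by push_cast; ring
    have e2 : (j + 1) - ((1 : ℕ) : ZMod n) = j := by push_cast; ring
    rw [e1, e2] at h
    exact h.symm
  -- nonconstancy of the cross pattern
  have zero_ne_oneM : (0 : ZMod m) ≠ 1 := fun h => oneM h.symm
  have zero_ne_oneN : (0 : ZMod n) ≠ 1 := fun h => oneN h.symm
  have hTex : ∃ i j, A (z1 i) (z2 j) := by
    by_contra h
    push_neg at h
    exact hrectF 0 1 0 1 zero_ne_oneM zero_ne_oneN ((notF _ _).mp (h _ _))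
      ((notF _ _).mp (h _ _)) ((notF _ _).mp (h _ _)) ((notF _ _).mp (h _ _))
  have hFex : ∃ i j, ¬ A (z1 i) (z2 j) := by
    by_contra h
    push_neg at h
    exact hrectT 0 1 0 1 zero_ne_oneM zero_ne_oneN (h _ _) (h _ _) (h _ _) (h _ _)
  rcases eq_or_lt_of_le hmn with hEq | hLt
  · subst hEq
    exact caseEq A hm z1 z2 h1 h2 hdisj notF hvcM diag hTex hFex
  · -- m < n : the short cycle has period m in the long one
    have jper : ∀ (i : ZMod m) (j : ZMod n),
        A (z1 i) (z2 (j + ((m : ℕ) : ZMod n))) ↔ A (z1 i) (z2 j) := by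
      intro i j
      have h := diag m i (j + ((m : ℕ) : ZMod n))
      have e1 : i + ((m : ℕ) : ZMod m) = i := by
        rw [ZMod.natCast_self, add_zero]
      have e2 : (j + ((m : ℕ) : ZMod n)) - ((m : ℕ) : ZMod n) = j := by ring
      rw [e1, e2] at h
      exact h.symm
    have hmZn : ((m : ℕ) : ZMod n) ≠ 0 := by
      intro h
      have hv := ZMod.val_natCast_of_lt hLt
      rw [h, ZMod.val_zero] at hv
      omega
    have hjne : ∀ j : ZMod n, j ≠ j + ((m : ℕ) : ZMod n) := by
      intro j h
      exact hmZn (by linear_combination h.symm)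
    have col : ∀ (i i' : ZMod m) (j : ZMod n), i ≠ i' →
        ¬ (A (z1 i) (z2 j) ↔ A (z1 i') (z2 j)) := by
      intro i i' j hne hiff
      by_cases h : A (z1 i) (z2 j)
      · exact hrectT i i' j (j + ((m : ℕ) : ZMod n)) hne (hjne j) h ((jper i j).mpr h)
          (hiff.mp h) ((jper i' j).mpr (hiff.mp h))
      · have h' : ¬ A (z1 i') (z2 j) := fun hx => h (hiff.mpr hx)
        exact hrectF i i' j (j + ((m : ℕ) : ZMod n)) hne (hjne j) ((notF _ _).mp h)
          ((notF _ _).mp (fun hx => h ((jper i j).mp hx)))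
          ((notF _ _).mp h') ((notF _ _).mp (fun hx => h' ((jper i' j).mp hx)))
    have hm2 : m = 2 := by
      by_contra hne2
      have h3 : 3 ≤ m := by omega
      have dcast : ∀ a b : ℕ, a < m → b < m → a ≠ b →
          ((a : ℕ) : ZMod m) ≠ ((b : ℕ) : ZMod m) := by
        intro a b ha hb hab h
        rw [ZMod.natCast_eq_natCast_iff'] at h
        rw [Nat.mod_eq_of_lt ha, Nat.mod_eq_of_lt hb] at h
        exact hab h
      have c1 := col ((0 : ℕ) : ZMod m) ((1 : ℕ) : ZMod m) 0
        (dcast 0 1 (by omega) (by omega) (by omega))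
      have c2 := col ((0 : ℕ) : ZMod m) ((2 : ℕ) : ZMod m) 0
        (dcast 0 2 (by omega) (by omega) (by omega))
      have c3 := col ((1 : ℕ) : ZMod m) ((2 : ℕ) : ZMod m) 0
        (dcast 1 2 (by omega) (by omega) (by omega))
      tauto
    subst hm2
    have alt : ∀ (i : ZMod 2) (j : ZMod n), A (z1 (i + 1)) (z2 j) ↔ ¬ A (z1 i) (z2 j) := by
      intro i j
      have hiff := col i (i + 1) j (addM i)
      tauto
    exact caseLt A hLt z1 z2 h1 h2 hc2 hdisj notF hvcN alt diag1

private lemma merge {V ι : Type*} {A : V → V → Prop} {S : ι → Set V}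
    (hng : ¬ GoodCycle A S) {s t : Set V} (hd : Disjoint s t)
    (hxorst : ∀ u ∈ s, ∀ v ∈ t, Xor' (A u v) (A v u))
    (hextst : ∀ u ∈ s, ∀ v ∈ t, (A u v → ExtArc A S u v) ∧ (A v u → ExtArc A S v u))
    (hs : HamOn A s) (ht : HamOn A t) : HamOn A (s ∪ t) := by
  obtain ⟨m, hm, z1, h1, hc1, hr1⟩ := hs
  obtain ⟨n, hn, z2, h2, hc2, hr2⟩ := ht
  have m1 : ∀ i, z1 i ∈ s := fun i => hr1 ▸ ⟨i, rfl⟩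
  have m2 : ∀ j, z2 j ∈ t := fun j => hr2 ▸ ⟨j, rfl⟩
  have hdisj : ∀ i j, z1 i ≠ z2 j := by
    intro i j h
    exact Set.disjoint_left.mp hd (m1 i) (h ▸ m2 j)
  have hxor : ∀ i j, Xor' (A (z1 i) (z2 j)) (A (z2 j) (z1 i)) :=
    fun i j => hxorst _ (m1 i) _ (m2 j)
  have notF : ∀ i j, ¬ A (z1 i) (z2 j) ↔ A (z2 j) (z1 i) := by
    intro i j; rcases hxor i j with ⟨ha, hb⟩ | ⟨ha, hb⟩ <;> constructor <;> tauto
  have hext1 : ∀ i j, A (z1 i) (z2 j) → ExtArc A S (z1 i) (z2 j) :=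
    fun i j => (hextst _ (m1 i) _ (m2 j)).1
  have hext2 : ∀ i j, A (z2 j) (z1 i) → ExtArc A S (z2 j) (z1 i) :=
    fun i j => (hextst _ (m1 i) _ (m2 j)).2
  haveI : NeZero m := ⟨by omega⟩
  haveI : NeZero n := ⟨by omega⟩
  haveI : Fact (1 < m) := ⟨by omega⟩
  haveI : Fact (1 < n) := ⟨by omega⟩
  have zne1 : ∀ i : ZMod m, z1 i ≠ z1 (i + 1) := by
    intro i h
    have h' := left_eq_add.mp (h1 h)
    have hv := ZMod.val_one m
    rw [h', ZMod.val_zero] at hv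
    omega
  have zne2 : ∀ j : ZMod n, z2 j ≠ z2 (j + 1) := by
    intro j h
    have h' := left_eq_add.mp (h2 h)
    have hv := ZMod.val_one n
    rw [h', ZMod.val_zero] at hv
    omega
  have hstep : ∀ i j, A (z1 i) (z2 (j + 1)) → A (z1 (i + 1)) (z2 j) := by
    intro i j hzz
    by_contra hnc
    have hrev : A (z2 j) (z1 (i + 1)) := (notF _ _).mp hnc
    exact hng ⟨z1 i, z1 (i + 1), z2 j, z2 (j + 1),
      pw4 (zne1 i) (hdisj _ _) (hdisj _ _) (hdisj _ _) (hdisj _ _) (zne2 j),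
      hc1 i, hrev, hc2 j, hzz, Or.inr ⟨hext2 _ _ hrev, hext1 _ _ hzz⟩⟩
  have hrectT : ∀ i i' j j', i ≠ i' → j ≠ j' → A (z1 i) (z2 j) → A (z1 i) (z2 j') →
      A (z1 i') (z2 j) → A (z1 i') (z2 j') → False := by
    intro i i' j j' hi hj a1 a2 a3 a4
    exact hng ⟨z1 i, z2 j, z1 i', z2 j',
      pw4 (hdisj _ _) (h1.ne hi) (hdisj _ _) (Ne.symm (hdisj _ _)) (h2.ne hj) (hdisj _ _),
      a1, a3, a4, a2, Or.inl ⟨hext1 _ _ a1, hext1 _ _ a4⟩⟩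
  have hrectF : ∀ i i' j j', i ≠ i' → j ≠ j' → A (z2 j) (z1 i) → A (z2 j') (z1 i) →
      A (z2 j) (z1 i') → A (z2 j') (z1 i') → False := by
    intro i i' j j' hi hj b1 b2 b3 b4
    exact hng ⟨z2 j, z1 i, z2 j', z1 i',
      pw4 (Ne.symm (hdisj _ _)) (h2.ne hj) (Ne.symm (hdisj _ _)) (hdisj _ _) (h1.ne hi)
        (Ne.symm (hdisj _ _)),
      b1, b2, b4, b3, Or.inl ⟨hext2 _ _ b1, hext2 _ _ b4⟩⟩
  rcases le_or_gt m n with hmn | hnm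
  · have hcore := core A hm hn hmn z1 z2 h1 h2 hc1 hc2 hdisj hxor hstep hrectT hrectF
    rw [hr1, hr2] at hcore
    exact hcore
  · have hdisj' : ∀ j i, z2 j ≠ z1 i := fun j i => (hdisj i j).symm
    have hxor' : ∀ j i, Xor' (A (z2 j) (z1 i)) (A (z1 i) (z2 j)) := by
      intro j i
      rcases hxor i j with ⟨ha, hb⟩ | ⟨ha, hb⟩
      · exact Or.inr ⟨ha, hb⟩
      · exact Or.inl ⟨ha, hb⟩
    have hstep' : ∀ j i, A (z2 j) (z1 (i + 1)) → A (z2 (j + 1)) (z1 i) := by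
      intro j i hzz
      by_contra hnc
      have h4 : A (z1 i) (z2 (j + 1)) := by
        rcases hxor i (j + 1) with ⟨ha, hb⟩ | ⟨ha, hb⟩
        · exact ha
        · exact absurd ha hnc
      rcases hxor (i + 1) j with ⟨ha, hb⟩ | ⟨ha, hb⟩
      · exact hb hzz
      · exact hb (hstep i j h4)
    have hrectT' : ∀ j j' i i', j ≠ j' → i ≠ i' → A (z2 j) (z1 i) → A (z2 j) (z1 i') →
        A (z2 j') (z1 i) → A (z2 j') (z1 i') → False := by
      intro j j' i i' hj hi b1 b2 b3 b4
      exact hrectF i i' j j' hi hj b1 b3 b2 b4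
    have hrectF' : ∀ j j' i i', j ≠ j' → i ≠ i' → A (z1 i) (z2 j) → A (z1 i') (z2 j) →
        A (z1 i) (z2 j') → A (z1 i') (z2 j') → False := by
      intro j j' i i' hj hi b1 b2 b3 b4
      exact hrectT i i' j j' hi hj b1 b3 b2 b4
    have hcore := core A hn hm (le_of_lt hnm) z2 z1 h2 h1 hc2 hc1 hdisj' hxor' hstep'
      hrectT' hrectF'
    rw [hr2, hr1, Set.union_comm] at hcore
    exact hcore


/-- Every strong generalized sum of k ≥ 2 pairwise vertex-disjoint
Hamiltonian digraphs containing no good cycle is Hamiltonian. -/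
theorem stmt17 {V : Type*} (A : V → V → Prop) {k : ℕ} (hk : 2 ≤ k)
    (S : Fin k → Set V)
    (hgs : GenSumFam A Set.univ S) (hham : ∀ i, HamOn A (S i))
    (hstrong : ∀ u v : V, u ≠ v → Relation.ReflTransGen A u v)
    (hng : ¬ GoodCycle A S) :
    ∃ N : ℕ, 2 ≤ N ∧ ∃ z : ZMod N → V, Function.Injective z ∧
      (∀ i, A (z i) (z (i + 1))) ∧ Set.range z = Set.univ := by
  obtain ⟨hdisjS, hUnion, hXorS⟩ := hgs
  have hmergeStep : ∀ (r : ℕ) (hr : r + 1 < k),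
      HamOn A {x | ∃ i : Fin k, i.val ≤ r ∧ x ∈ S i} →
      HamOn A {x | ∃ i : Fin k, i.val ≤ r + 1 ∧ x ∈ S i} := by
    intro r hr hH
    have hTU : {x | ∃ i : Fin k, i.val ≤ r + 1 ∧ x ∈ S i}
        = {x | ∃ i : Fin k, i.val ≤ r ∧ x ∈ S i} ∪ S ⟨r + 1, hr⟩ := by
      ext x
      simp only [Set.mem_setOf_eq, Set.mem_union]
      constructor
      · rintro ⟨i, hi, hx⟩
        by_cases h : i.val ≤ r
        · exact Or.inl ⟨i, h, hx⟩
        · have he : i = ⟨r + 1, hr⟩ := Fin.ext (show i.val = r + 1 by omega)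
          exact Or.inr (he ▸ hx)
      · rintro (⟨i, hi, hx⟩ | hx)
        · exact ⟨i, by omega, hx⟩
        · exact ⟨⟨r + 1, hr⟩, le_refl _, hx⟩
    rw [hTU]
    have hne : ∀ i : Fin k, i.val ≤ r → i ≠ ⟨r + 1, hr⟩ := by
      intro i hi h
      rw [h] at hi
      exact Nat.not_succ_le_self r hi
    refine merge hng ?_ ?_ ?_ hH (hham _)
    · rw [Set.disjoint_left]
      rintro x ⟨i, hi, hx⟩ hx'
      exact Set.disjoint_left.mp (hdisjS (hne i hi)) hx hx'
    · rintro u ⟨i, hi, hu⟩ v hv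
      exact hXorS i ⟨r + 1, hr⟩ (hne i hi) u hu v hv
    · rintro u ⟨i, hi, hu⟩ v hv
      constructor
      · intro ha
        exact ⟨ha, i, ⟨r + 1, hr⟩, hne i hi, hu, hv⟩
      · intro ha
        exact ⟨ha, ⟨r + 1, hr⟩, i, Ne.symm (hne i hi), hv, hu⟩
  have main : ∀ r : ℕ, r < k → HamOn A {x | ∃ i : Fin k, i.val ≤ r ∧ x ∈ S i} := by
    intro r
    induction r with
    | zero =>
      intro hr
      have he : {x | ∃ i : Fin k, i.val ≤ 0 ∧ x ∈ S i} = S ⟨0, hr⟩ := by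
        ext x
        simp only [Set.mem_setOf_eq]
        constructor
        · rintro ⟨i, hi, hx⟩
          have he2 : i = ⟨0, hr⟩ := Fin.ext (show i.val = 0 by omega)
          exact he2 ▸ hx
        · intro hx
          exact ⟨⟨0, hr⟩, le_refl _, hx⟩
      rw [he]
      exact hham _
    | succ r ih =>
      intro hr
      exact hmergeStep r hr (ih (by omega))
  have hfin := main (k - 1) (by omega)
  have huniv : {x | ∃ i : Fin k, i.val ≤ k - 1 ∧ x ∈ S i} = Set.univ := by
    apply Set.eq_univ_of_forall
    intro x
    have hx : x ∈ ⋃ i, S i := by rw [hUnion]; trivial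
    obtain ⟨i, hi⟩ := Set.mem_iUnion.mp hx
    exact ⟨i, by have := i.isLt; omega, hi⟩
  rw [huniv] at hfin
  exact hfin
end

section
/- Let D be a strong generalized sum of two vertex-disjoint digraphs D₁, D₂ with Hamiltonian cycles C₁ = (x₀,…,x_{n−1},x₀) and C₂ = (y₀,…,y_{m−1},y₀), with no good pair of arcs between C₁ and C₂, and suppose (x₀, y₀, y₁, x₀) is a 3-cycle in D and n > m. Write n = qm + r with q ≥ 1 and 0 ≤ r ≤ m−1. Then for each t ∈ [0, n−1], the q vertices x_{t+m}, x_{t+2m}, …, x_{t+qm} are pairwise distinct and each sends an arc to y_{−t} in D (subscripts mod n and m). -/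
/-- In a strong generalized sum of two Hamiltonian digraphs with no good
pair, with a 3-cycle (x₀, y₀, y₁, x₀) and n > m, writing n = qm + r (q ≥ 1, 0 ≤ r < m),
for each t ∈ [0, n−1] the vertices x_{t+m}, x_{t+2m}, …, x_{t+qm} are pairwise distinct
and each sends an arc to y_{−t}. -/
theorem stmt18 {V : Type*} (A : V → V → Prop) {n m : ℕ}
    (hn : 2 ≤ n) (hm : 2 ≤ m) (hnm : m < n)
    (x : ZMod n → V) (y : ZMod m → V)
    (hxinj : Function.Injective x) (hyinj : Function.Injective y)
    (hxcyc : ∀ i, A (x i) (x (i + 1))) (hycyc : ∀ i, A (y i) (y (i + 1)))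
    (hdisj : ∀ s t, x s ≠ y t)
    (hcov : ∀ v : V, (∃ s, x s = v) ∨ (∃ t, y t = v))
    (hone : ∀ s t, Xor' (A (x s) (y t)) (A (y t) (x s)))
    (hstrong : ∀ u v : V, u ≠ v → Relation.ReflTransGen A u v)
    (hngp : ¬ ∃ (s : ZMod n) (r : ZMod m), A (x s) (y r) ∧ A (y (r - 1)) (x (s + 1)))
    (h1 : A (x 0) (y 0)) (h2 : A (y 1) (x 0))
    (q r : ℕ) (hq : 1 ≤ q) (hr : r < m) (hqr : n = q * m + r) :
    ∀ t : ℕ, t ≤ n - 1 →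
      (∀ i j : ℕ, 1 ≤ i → i ≤ q → 1 ≤ j → j ≤ q →
        x (((t + i * m : ℕ) : ZMod n)) = x (((t + j * m : ℕ) : ZMod n)) → i = j) ∧
      (∀ i : ℕ, 1 ≤ i → i ≤ q →
        A (x (((t + i * m : ℕ) : ZMod n))) (y (-(t : ZMod m)))) := by
  -- Step lemma: an arc x_s → y_r propagates to x_{s+1} → y_{r-1}.
  have step : ∀ (s : ZMod n) (u : ZMod m), A (x s) (y u) → A (x (s + 1)) (y (u - 1)) := by
    intro s u h
    rcases hone (s + 1) (u - 1) with ⟨h', _⟩ | ⟨h', _⟩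
    · exact h'
    · exact absurd ⟨s, u, h, h'⟩ hngp
  -- Iterate: A (x k) (y (-k)) for every natural k.
  have chain : ∀ k : ℕ, A (x (k : ZMod n)) (y (-(k : ZMod m))) := by
    intro k
    induction k with
    | zero => simpa using h1
    | succ k ih =>
        have := step (k : ZMod n) (-(k : ZMod m)) ih
        have e1 : ((k : ZMod n) + 1) = ((k + 1 : ℕ) : ZMod n) := by push_cast; ring
        have e2 : (-(k : ZMod m) - 1) = -((k + 1 : ℕ) : ZMod m) := by push_cast; ring
        rwa [e1, e2] at this
  intro t _
  constructor
  · -- distinctness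
    intro i j hi hiq hj hjq hxeq
    have hz : ((t + i * m : ℕ) : ZMod n) = ((t + j * m : ℕ) : ZMod n) := hxinj hxeq
    rw [ZMod.natCast_eq_natCast_iff] at hz
    by_contra hne
    -- wlog i < j
    rcases Nat.lt_or_ge i j with hij | hij
    · have hdvd : n ∣ (j - i) * m := by
        have := (Nat.modEq_iff_dvd' (by nlinarith : t + i * m ≤ t + j * m)).mp hz
        have e : t + j * m - (t + i * m) = (j - i) * m := by
          rw [Nat.add_sub_add_left, Nat.sub_mul]
        rwa [e] at this
      have hpos : 0 < (j - i) * m := Nat.mul_pos (by omega) (by omega)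
      have hlt : (j - i) * m < n := by
        have h1 : (j - i) * m ≤ (q - 1) * m := Nat.mul_le_mul_right m (by omega)
        have h2 : (q - 1) * m + m = q * m := by
          cases q with
          | zero => omega
          | succ q' => simp [Nat.succ_mul]
        omega
      exact absurd (Nat.le_of_dvd hpos hdvd) (by omega)
    · have hij' : j < i := by omega
      have hdvd : n ∣ (i - j) * m := by
        have := (Nat.modEq_iff_dvd' (by nlinarith : t + j * m ≤ t + i * m)).mp hz.symm
        have e : t + i * m - (t + j * m) = (i - j) * m := by
          rw [Nat.add_sub_add_left, Nat.sub_mul]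
        rwa [e] at this
      have hpos : 0 < (i - j) * m := Nat.mul_pos (by omega) (by omega)
      have hlt : (i - j) * m < n := by
        have h1 : (i - j) * m ≤ (q - 1) * m := Nat.mul_le_mul_right m (by omega)
        have h2 : (q - 1) * m + m = q * m := by
          cases q with
          | zero => omega
          | succ q' => simp [Nat.succ_mul]
        omega
      exact absurd (Nat.le_of_dvd hpos hdvd) (by omega)
  · intro i hi hiq
    have := chain (t + i * m)
    have e : -((t + i * m : ℕ) : ZMod m) = -(t : ZMod m) := by
      push_cast
      simp [ZMod.natCast_self]
    rwa [e] at this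
end
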